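/- arXiv:2211.06850 — 9 statements merged into one kernel-verified Lean document; each statement's English description precedes it below -/
import Mathlib

section
/- For any cost c ≥ 0 and any two actions ℓ ≤ î, if R_î − γ_î φ ≥ R_ℓ − γ_ℓ φ for some φ ≥ c/α with α ∈ (0,1], then αR_î − γ_î c ≥ αR_ℓ − γ_ℓ c. Consequently, if î maximizes virtual welfare R_i − γ_i φ̄(c) and φ̄(c) ≥ c/α, then the action chosen under the linear contract with parameter α satisfies i*(αr, c) ≥ î, and hence R_{i*(αr,c)} ≥ R_î. -/
/-- If `ℓ ≤ î` and `R_î - γ_î φ ≥ R_ℓ - γ_ℓ φ` for some `φ ≥ c/α`,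
then `α R_î - γ_î c ≥ α R_ℓ - γ_ℓ c`.  Consequently, if `î` maximizes the virtual welfare
`R_i - γ_i φ̄(c)` and `φ̄(c) ≥ c/α`, then the (largest, tie-breaking in favor of the
principal) action `i*(αr, c)` chosen under the linear contract satisfies
`i*(αr,c) ≥ î` and hence `R_{i*(αr,c)} ≥ R_î`. -/
theorem linear_choice_dominates_virtual_choice
    (n : ℕ) (γ R : Fin (n + 1) → ℝ)
    (hγ0 : γ 0 = 0) (hγ : StrictMono γ) (hR : StrictMono R)
    (α c : ℝ) (hα0 : 0 < α) (hα1 : α ≤ 1) (hc : 0 ≤ c)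
    (φbarc : ℝ) (hφbarc : c / α ≤ φbarc)
    (ihat : Fin (n + 1))
    (hihat : ∀ j, R j - γ j * φbarc ≤ R ihat - γ ihat * φbarc)
    (istar : Fin (n + 1))
    (hmax : ∀ j, α * R j - γ j * c ≤ α * R istar - γ istar * c)
    (htie : ∀ j, (∀ k, α * R k - γ k * c ≤ α * R j - γ j * c) → j ≤ istar) :
    (∀ (ℓ i' : Fin (n + 1)) (φ : ℝ), ℓ ≤ i' → c / α ≤ φ →
        R ℓ - γ ℓ * φ ≤ R i' - γ i' * φ →
        α * R ℓ - γ ℓ * c ≤ α * R i' - γ i' * c) ∧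
      ihat ≤ istar ∧ R ihat ≤ R istar := by
  have key : ∀ (ℓ i' : Fin (n + 1)) (φ : ℝ), ℓ ≤ i' → c / α ≤ φ →
      R ℓ - γ ℓ * φ ≤ R i' - γ i' * φ →
      α * R ℓ - γ ℓ * c ≤ α * R i' - γ i' * c := by
    intro ℓ i' φ hle hφ hRφ
    have hγle : γ ℓ ≤ γ i' := hγ.monotone hle
    have h1 : (γ i' - γ ℓ) * φ ≤ R i' - R ℓ := by nlinarith
    have hcα : c ≤ α * φ := by
      rw [div_le_iff₀ hα0] at hφ; linarith [hφ]
    have h2 : (γ i' - γ ℓ) * c ≤ (γ i' - γ ℓ) * (α * φ) :=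
      mul_le_mul_of_nonneg_left hcα (by linarith)
    nlinarith
  refine ⟨key, ?_⟩
  have hs : ihat ≤ istar := by
    rcases le_total istar ihat with h | h
    · have h1 : α * R istar - γ istar * c ≤ α * R ihat - γ ihat * c :=
        key istar ihat φbarc h hφbarc (hihat istar)
      exact htie ihat fun k => le_trans (hmax k) h1
    · exact h
  exact ⟨hs, hR.monotone hs⟩
end

section
/- Fix α, β, η ∈ (0,1]. Consider a principal-agent instance with type distribution G supported on [c̲, c̄]. If there exists κ ∈ [c̲/α, c̄] such that G(αc) ≥ β·G(c) for all c ≥ κ (slowly-increasing condition), and the welfare from types in [κ, c̄] is at least η times the total optimal welfare (small-tail condition), then the expected revenue of the linear contract with parameter α is at least (1−α)·β·η times the optimal expected welfare Wel = E_{c∼G}[max_i (R_i − γ_i c)]. -/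
open MeasureTheory

set_option maxHeartbeats 1000000

open MeasureTheory Set

private lemma triangle_swap {r w : ℝ → ℝ} {l b : ℝ}
    (hr : IntegrableOn r (Ioc l b)) (hw : IntegrableOn w (Ioc l b)) :
    ∫ t in Ioc l b, r t * ∫ s in Ioc t b, w s
      = ∫ s in Ioc l b, (∫ t in Ioc l s, r t) * w s := by
  set μ := volume.restrict (Ioc l b) with hμ
  set F : ℝ → ℝ → ℝ := fun t s => {z : ℝ × ℝ | z.1 < z.2}.indicator
    (fun z => r z.1 * w z.2) (t, s) with hF
  have hmeas : MeasurableSet {z : ℝ × ℝ | z.1 < z.2} :=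
    measurableSet_lt measurable_fst measurable_snd
  have hint : Integrable (Function.uncurry F) (μ.prod μ) := by
    have h1 : Integrable (fun z : ℝ × ℝ => r z.1 * w z.2) (μ.prod μ) := hr.mul_prod hw
    exact h1.indicator hmeas
  have key := integral_integral_swap hint
  have hL : ∀ t ∈ Ioc l b, (∫ s, F t s ∂μ) = r t * ∫ s in Ioc t b, w s := by
    intro t ht
    have : ∀ s, F t s = (Ioi t).indicator (fun s => r t * w s) s := by
      intro s
      by_cases h : t < s <;> simp [hF, Set.indicator, h]
    simp only [this]
    rw [hμ, setIntegral_indicator measurableSet_Ioi]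
    have : Ioc l b ∩ Ioi t = Ioc t b := by
      ext x; simp only [mem_inter_iff, mem_Ioc, mem_Ioi]
      constructor
      · rintro ⟨⟨_, h2⟩, h3⟩; exact ⟨h3, h2⟩
      · rintro ⟨h1, h2⟩; exact ⟨⟨lt_of_le_of_lt ht.1.le h1, h2⟩, h1⟩
    rw [this, integral_const_mul]
  have hR : ∀ s ∈ Ioc l b, (∫ t, F t s ∂μ) = (∫ t in Ioc l s, r t) * w s := by
    intro s hs
    have h1 : ∀ t, F t s = (Iio s).indicator (fun t => r t * w s) t := by
      intro t
      by_cases h : t < s <;> simp [hF, Set.indicator, h]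
    simp only [h1]
    rw [hμ, setIntegral_indicator measurableSet_Iio]
    have h2 : Ioc l b ∩ Iio s = Ioo l s := by
      ext x; simp only [mem_inter_iff, mem_Ioc, mem_Ioo, mem_Iio]
      constructor
      · rintro ⟨⟨hx1, _⟩, hx3⟩; exact ⟨hx1, hx3⟩
      · rintro ⟨hx1, hx2⟩; exact ⟨⟨hx1, hx2.le.trans hs.2⟩, hx2⟩
    rw [h2, ← integral_Ioc_eq_integral_Ioo, integral_mul_const]
  calc ∫ t in Ioc l b, r t * ∫ s in Ioc t b, w s
      = ∫ t, (∫ s, F t s ∂μ) ∂μ := by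
        rw [hμ]
        exact (setIntegral_congr_fun measurableSet_Ioc (fun t ht => (hL t ht).symm))
    _ = ∫ s, (∫ t, F t s ∂μ) ∂μ := key
    _ = ∫ s in Ioc l b, (∫ t in Ioc l s, r t) * w s := by
        rw [hμ]
        exact setIntegral_congr_fun measurableSet_Ioc (fun s hs => hR s hs)

/-- Theorem: slowly-increasing distributions: if the type distribution `G`
is `(α, β, κ)`-slowly-increasing and the instance satisfies the `(κ, η)`-small-tail
condition for welfare, then the linear contract with parameter `α` earns expected
revenue at least `(1-α)·β·η` times the optimal expected welfare. -/
theorem linear_contract_approx_slowly_increasing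
    (n : ℕ) (γ R : Fin (n + 1) → ℝ)
    (hγ0 : γ 0 = 0) (hγ : StrictMono γ) (hR0 : R 0 = 0) (hR : StrictMono R)
    (cl cu : ℝ) (hcl : 0 ≤ cl) (hclu : cl < cu)
    (g G : ℝ → ℝ) (hg : ∀ c, 0 ≤ g c)
    (hgi : ∀ a b : ℝ, IntervalIntegrable g volume a b)
    (hG : ∀ c, G c = ∫ x in cl..c, g x) (hG1 : G cu = 1)
    (α β η : ℝ) (hα0 : 0 < α) (hα1 : α ≤ 1) (hβ0 : 0 < β) (hβ1 : β ≤ 1)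
    (hη0 : 0 < η) (hη1 : η ≤ 1)
    (κ : ℝ) (hκl : cl / α ≤ κ) (hκu : κ ≤ cu)
    -- slowly-increasing condition: G(αc) ≥ β G(c) for all c ≥ κ
    (hslow : ∀ c, κ ≤ c → β * G c ≤ G (α * c))
    -- agent's choice: istar t c maximizes t·R_i - γ_i c (t = 1 gives welfare maximizer)
    (istar : ℝ → ℝ → Fin (n + 1))
    (histar : ∀ t c j, t * R j - γ j * c ≤ t * R (istar t c) - γ (istar t c) * c)
    (hmeas : ∀ t, Measurable fun c => (istar t c : ℕ))
    -- small-tail condition: welfare from types in [κ, cu] is at least η times total welfare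
    (hsmall : η * (∫ c in cl..cu, g c * (R (istar 1 c) - γ (istar 1 c) * c))
        ≤ ∫ c in κ..cu, g c * (R (istar 1 c) - γ (istar 1 c) * c)) :
    (1 - α) * β * η * (∫ c in cl..cu, g c * (R (istar 1 c) - γ (istar 1 c) * c))
      ≤ ∫ c in cl..cu, g c * ((1 - α) * R (istar α c)) := by
  classical
  have hαne : α ≠ 0 := ne_of_gt hα0
  set a := cl / α with hadef
  set b := cu / α with hbdef
  have hcu0 : 0 < cu := lt_of_le_of_lt hcl hclu
  have hαa : α * a = cl := by rw [hadef]; field_simp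
  have hαb : α * b = cu := by rw [hbdef]; field_simp
  have hab : a < b := by rw [hadef, hbdef]; exact div_lt_div_of_pos_right hclu hα0
  have ha0 : 0 ≤ a := div_nonneg hcl hα0.le
  have hcub : cu ≤ b := by rw [hbdef, le_div_iff₀ hα0]; nlinarith
  have hκa : a ≤ κ := hκl
  have hκb : κ ≤ b := hκu.trans hcub
  have hclκ : cl ≤ κ := le_trans (by rw [le_div_iff₀ hα0]; nlinarith : cl ≤ cl / α) hκl
  -- the welfare function W and its properties
  have hne : (Finset.univ : Finset (Fin (n+1))).Nonempty := Finset.univ_nonempty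
  set W : ℝ → ℝ := fun c => Finset.univ.sup' hne (fun j => R j - γ j * c) with hWdef
  have hWd : ∀ c, W c = Finset.univ.sup' hne (fun j => R j - γ j * c) := fun c => by
    rw [hWdef]
  have hWge : ∀ c j, R j - γ j * c ≤ W c := fun c j => by
    rw [hWd]; exact Finset.le_sup' (fun j => R j - γ j * c) (Finset.mem_univ j)
  have hγnn : ∀ j, 0 ≤ γ j := fun j => hγ0 ▸ hγ.monotone (Fin.zero_le j)
  have hRnn : ∀ j, 0 ≤ R j := fun j => hR0 ▸ hR.monotone (Fin.zero_le j)
  have hW0 : ∀ c, 0 ≤ W c := fun c => by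
    have := hWge c 0; rw [hR0, hγ0] at this; simpa using this
  have hWeq : ∀ c, W c = R (istar 1 c) - γ (istar 1 c) * c := fun c =>
    le_antisymm (by rw [hWd]; exact Finset.sup'_le _ _ fun j _ => by simpa using histar 1 c j)
      (hWge c _)
  have hWcont : Continuous W := by
    rw [hWdef]
    apply Continuous.finset_sup'_apply hne
    intro j _
    exact continuous_const.sub (continuous_const.mul continuous_id)
  -- the argmax set, its minimal element J, and the slopes v, w
  set A : ℝ → Finset (Fin (n+1)) :=
    fun c => Finset.univ.filter (fun j => ∀ k, R k - γ k * c ≤ R j - γ j * c) with hA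
  have h1A : ∀ c, istar 1 c ∈ A c := fun c =>
    Finset.mem_filter.2 ⟨Finset.mem_univ _, fun k => by simpa using histar 1 c k⟩
  have hAne : ∀ c, (A c).Nonempty := fun c => ⟨_, h1A c⟩
  set J : ℝ → Fin (n+1) := fun c => (A c).min' (hAne c) with hJ
  have hJA : ∀ c, J c ∈ A c := fun c => Finset.min'_mem _ _
  have hJmax : ∀ c k, R k - γ k * c ≤ R (J c) - γ (J c) * c :=
    fun c k => (Finset.mem_filter.1 (hJA c)).2 k
  have hJle : ∀ c j, j ∈ A c → γ (J c) ≤ γ j :=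
    fun c j hj => hγ.monotone (Finset.min'_le _ _ hj)
  have hWJ : ∀ c, W c = R (J c) - γ (J c) * c := fun c =>
    le_antisymm (by rw [hWd]; exact Finset.sup'_le _ _ fun j _ => hJmax c j) (hWge c _)
  set v : ℝ → ℝ := fun c => γ (J c) with hv
  set w : ℝ → ℝ := fun c => γ (istar 1 c) with hw
  -- tie set
  set S : Set ℝ :=
    {c | ∃ i j : Fin (n+1), i ≠ j ∧ R i - γ i * c = R j - γ j * c} with hS
  have hSfin : S.Finite := by
    have hsub : S ⊆ ⋃ (i : Fin (n+1)) (j : Fin (n+1)),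
        {c : ℝ | i ≠ j ∧ R i - γ i * c = R j - γ j * c} := by
      rintro c ⟨i, j, hij, hc⟩
      exact Set.mem_iUnion.2 ⟨i, Set.mem_iUnion.2 ⟨j, hij, hc⟩⟩
    refine Set.Finite.subset (Set.finite_iUnion fun i => Set.finite_iUnion fun j => ?_) hsub
    rcases eq_or_ne i j with h | h
    · convert Set.finite_empty
      ext c; simp [h]
    · apply Set.Subsingleton.finite
      rintro x ⟨-, hx⟩ y ⟨-, hy⟩
      have hγij : γ i - γ j ≠ 0 := sub_ne_zero.2 fun hh => h (hγ.injective hh)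
      have hxy : (γ i - γ j) * x = (γ i - γ j) * y := by ring_nf; nlinarith [hx, hy]
      exact mul_left_cancel₀ hγij hxy
  have hS0 : volume S = 0 := hSfin.measure_zero _
  have hvwS : ∀ c, c ∉ S → v c = w c := by
    intro c hc
    have h1 : R (J c) - γ (J c) * c = R (istar 1 c) - γ (istar 1 c) * c :=
      le_antisymm (by simpa using histar 1 c (J c)) (hJmax c _)
    rcases eq_or_ne (J c) (istar 1 c) with h | h
    · rw [hv, hw]; simp only; rw [h]
    · exact absurd ⟨J c, istar 1 c, h, h1⟩ hc
  have hvwae : v =ᵐ[volume] w := by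
    refine measure_mono_null (fun c hc => ?_) hS0
    simp only [mem_setOf_eq, mem_compl_iff] at hc ⊢
    by_contra hcs
    exact hc (hvwS c hcs)
  -- measurability and integrability of w
  have hwmeas : Measurable w := by
    have h1 : Measurable fun c => (istar 1 c : ℕ) := hmeas 1
    have h2 : w = (fun k : ℕ => if h : k < n + 1 then γ ⟨k, h⟩ else 0)
        ∘ (fun c => (istar 1 c : ℕ)) := by
      funext c
      simp only [hw, Function.comp_apply, (istar 1 c).isLt, dif_pos, Fin.eta]
    rw [h2]
    exact measurable_from_top.comp h1
  have hwnn : ∀ c, 0 ≤ w c := fun c => hγnn _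
  have hwint : ∀ t₁ t₂ : ℝ, IntervalIntegrable w volume t₁ t₂ := by
    intro t₁ t₂
    apply IntervalIntegrable.mono_fun' (g := fun _ => γ (Fin.last n)) intervalIntegrable_const
      hwmeas.aestronglyMeasurable.restrict
    filter_upwards with c
    rw [Real.norm_eq_abs, abs_of_nonneg (hwnn c)]
    exact hγ.monotone (Fin.le_last _)
  have hvint : ∀ t₁ t₂ : ℝ, IntervalIntegrable v volume t₁ t₂ := by
    intro t₁ t₂
    constructor
    · exact ((hwint t₁ t₂).1).congr (ae_restrict_of_ae hvwae.symm)
    · exact ((hwint t₁ t₂).2).congr (ae_restrict_of_ae hvwae.symm)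
  -- FTC: right derivative of W is -v everywhere
  have hderiv : ∀ x : ℝ, HasDerivWithinAt W (-(v x)) (Ioi x) x := by
    intro x
    have hev : ∀ᶠ y in nhds x, ∀ k : Fin (n+1), k ∉ A x →
        R k - γ k * y < R (J x) - γ (J x) * y := by
      rw [Filter.eventually_all]
      intro k
      by_cases hk : k ∈ A x
      · filter_upwards with y h; exact absurd hk h
      · have hlt : R k - γ k * x < R (J x) - γ (J x) * x := by
          rcases (hJmax x k).lt_or_eq with h | h
          · exact h
          · exfalso
            apply hk
            refine Finset.mem_filter.2 ⟨Finset.mem_univ _, fun m => ?_⟩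
            exact (hJmax x m).trans h.ge
        have hc1 : ContinuousAt (fun y => R k - γ k * y) x := by fun_prop
        have hc2 : ContinuousAt (fun y => R (J x) - γ (J x) * y) x := by fun_prop
        have := hc1.eventually_lt hc2 hlt
        filter_upwards [this] with y hy _
        exact hy
    have hev2 : W =ᶠ[nhdsWithin x (Ioi x)] (fun y => R (J x) - γ (J x) * y) := by
      filter_upwards [nhdsWithin_le_nhds hev, self_mem_nhdsWithin] with y hy hy'
      have hxy : x ≤ y := (le_of_lt hy')
      apply le_antisymm
      · rw [hWd]
        apply Finset.sup'_le
        intro k _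
        by_cases hk : k ∈ A x
        · have h1 : R k - γ k * x ≤ R (J x) - γ (J x) * x := hJmax x k
          have h2 : γ (J x) ≤ γ k := hJle x k hk
          nlinarith
        · exact (hy k hk).le
      · exact hWge y (J x)
    have hd : HasDerivAt (fun y => R (J x) - γ (J x) * y) (-(γ (J x))) x := by
      simpa using ((hasDerivAt_id x).const_mul (γ (J x))).const_sub (R (J x))
    exact hd.hasDerivWithinAt.congr_of_eventuallyEq hev2 (hWJ x)
  -- key FTC identity
  have key : ∀ t : ℝ, ∫ s in t..b, w s = W t - W b := by
    intro t
    have h1 : ∫ s in t..b, -(v s) = W b - W t :=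
      intervalIntegral.integral_eq_sub_of_hasDeriv_right hWcont.continuousOn
        (fun x _ => hderiv x) ((hvint t b).neg)
    rw [intervalIntegral.integral_neg] at h1
    have h2 : ∫ s in t..b, v s = W t - W b := by linarith
    rw [← h2]
    apply intervalIntegral.integral_congr_ae
    filter_upwards [hvwae] with s hs _
    exact hs.symm
  -- G facts
  have hGdiff : ∀ x y : ℝ, G y - G x = ∫ t in x..y, g t := by
    intro x y
    rw [hG x, hG y]
    exact intervalIntegral.integral_interval_sub_left (hgi cl y) (hgi cl x)
  have hGcl : G cl = 0 := by rw [hG]; simp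
  have hGmono : ∀ x y : ℝ, x ≤ y → G x ≤ G y := by
    intro x y h
    have h1 := hGdiff x y
    have h2 : 0 ≤ ∫ t in x..y, g t :=
      intervalIntegral.integral_nonneg h (fun u _ => hg u)
    linarith
  have hG0 : ∀ x, cl ≤ x → 0 ≤ G x := fun x h => hGcl ▸ hGmono cl x h
  have hGcont : Continuous G := by
    have h1 : Continuous fun c => ∫ x in cl..c, g x :=
      intervalIntegral.continuous_primitive hgi cl
    exact h1.congr fun c => (hG c).symm
  -- the rescaled density p
  have hpint : ∀ x y : ℝ, IntervalIntegrable (fun t => α * g (α * t)) volume x y := by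
    intro x y
    have h1 := (hgi (α * x) (α * y)).comp_mul_left (c := α)
    rw [mul_div_cancel_left₀ _ hαne, mul_div_cancel_left₀ _ hαne] at h1
    exact h1.const_mul α
  have hGint : ∀ s : ℝ, ∫ t in a..s, α * g (α * t) = G (α * s) := by
    intro s
    rw [intervalIntegral.integral_const_mul, intervalIntegral.integral_comp_mul_left g hαne,
      hαa, smul_eq_mul, hG (α * s)]
    field_simp
  -- the expansion identity
  have hgW : ∀ x y : ℝ, IntervalIntegrable (fun c => g c * W c) volume x y :=
    fun x y => (hgi x y).mul_continuousOn hWcont.continuousOn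
  have expand : ∀ (l : ℝ) (r : ℝ → ℝ), l ≤ b → (∀ x y : ℝ, IntervalIntegrable r volume x y) →
      ∫ x in l..b, r x * W x
        = (∫ x in l..b, r x) * W b + ∫ s in l..b, (∫ t in l..s, r t) * w s := by
    intro l r hlb hr
    have h1 : ∫ x in l..b, r x * W x = ∫ x in l..b, (r x * W b + r x * (W x - W b)) :=
      intervalIntegral.integral_congr fun x _ => by ring
    rw [h1, intervalIntegral.integral_add ((hr l b).mul_const _)
      ((hr l b).mul_continuousOn (g := fun x => W x - W b) ((hWcont.sub continuous_const).continuousOn)),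
      intervalIntegral.integral_mul_const]
    congr 1
    have h2 : ∫ x in l..b, r x * (W x - W b) = ∫ x in l..b, r x * ∫ s in x..b, w s :=
      intervalIntegral.integral_congr fun x _ => by rw [key x]
    rw [h2, intervalIntegral.integral_of_le hlb, intervalIntegral.integral_of_le hlb]
    have h3 : ∀ x ∈ Ioc l b, r x * ∫ s in x..b, w s = r x * ∫ s in Ioc x b, w s := by
      intro x hx
      rw [intervalIntegral.integral_of_le hx.2]
    rw [setIntegral_congr_fun measurableSet_Ioc h3,
      triangle_swap (hr l b).1 (hwint l b).1]
    apply setIntegral_congr_fun measurableSet_Ioc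
    intro s hs
    show (∫ t in Ioc l s, r t) * w s = (∫ t in l..s, r t) * w s
    rw [intervalIntegral.integral_of_le hs.1.le]
  -- expansions of the two main integrals
  have hIA : ∫ x in a..b, (α * g (α * x)) * W x = W b + ∫ s in a..b, G (α * s) * w s := by
    rw [expand a _ hab.le hpint, hGint b, hαb, hG1, one_mul]
    congr 1
    exact intervalIntegral.integral_congr fun s _ => by rw [hGint s]
  have hIB : ∫ x in κ..b, (β * g x) * W x
      = (β * (G b - G κ)) * W b + ∫ s in κ..b, (β * (G s - G κ)) * w s := by
    rw [expand κ _ hκb (fun x y => (hgi x y).const_mul β)]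
    congr 1
    · congr 1
      rw [intervalIntegral.integral_const_mul, ← hGdiff]
    · exact intervalIntegral.integral_congr fun s _ => by
        rw [intervalIntegral.integral_const_mul, ← hGdiff]
  -- integrability of the slope-weighted terms
  have intGw : ∀ x y : ℝ, IntervalIntegrable (fun s => G (α * s) * w s) volume x y :=
    fun x y => (hwint x y).continuousOn_mul
      ((hGcont.comp (continuous_const.mul continuous_id)).continuousOn)
  have intBw : ∀ x y : ℝ, IntervalIntegrable (fun s => (β * (G s - G κ)) * w s) volume x y :=
    fun x y => (hwint x y).continuousOn_mul
      ((continuous_const.mul (hGcont.sub continuous_const)).continuousOn)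
  -- comparison of the two integrals
  have hcmp : ∫ x in κ..b, (β * g x) * W x ≤ ∫ x in a..b, (α * g (α * x)) * W x := by
    rw [hIA, hIB]
    have hGκ0 : 0 ≤ G κ := hG0 κ hclκ
    have t1 : (β * (G b - G κ)) * W b ≤ W b := by
      have h1 : β * G b ≤ G (α * b) := hslow b hκb
      rw [hαb, hG1] at h1
      have h2 : β * (G b - G κ) ≤ 1 := by
        have h3 : 0 ≤ β * G κ := mul_nonneg hβ0.le hGκ0
        have h4 : β * (G b - G κ) = β * G b - β * G κ := by ring
        linarith
      exact mul_le_of_le_one_left (hW0 b) h2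
    have t2 : ∫ s in κ..b, (β * (G s - G κ)) * w s ≤ ∫ s in κ..b, G (α * s) * w s := by
      apply intervalIntegral.integral_mono_on hκb (intBw κ b) (intGw κ b)
      intro s hs
      have h1 : β * G s ≤ G (α * s) := hslow s hs.1
      have h2 : β * (G s - G κ) ≤ G (α * s) := by
        have h3 : 0 ≤ β * G κ := mul_nonneg hβ0.le hGκ0
        have h4 : β * (G s - G κ) = β * G s - β * G κ := by ring
        linarith
      exact mul_le_mul_of_nonneg_right h2 (hwnn s)
    have t3 : ∫ s in κ..b, G (α * s) * w s ≤ ∫ s in a..b, G (α * s) * w s := by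
      rw [← intervalIntegral.integral_add_adjacent_intervals (intGw a κ) (intGw κ b)]
      have h4 : 0 ≤ ∫ s in a..κ, G (α * s) * w s := by
        apply intervalIntegral.integral_nonneg hκa
        intro u hu
        apply mul_nonneg _ (hwnn u)
        apply hG0
        calc cl = α * a := hαa.symm
          _ ≤ α * u := by nlinarith [hu.1]
      linarith
    linarith
  -- relate the tail welfare to the κ..b integral
  have htail : β * (∫ c in κ..cu, g c * (R (istar 1 c) - γ (istar 1 c) * c))
      ≤ ∫ x in κ..b, (β * g x) * W x := by
    have e1 : ∫ x in κ..b, (β * g x) * W x = β * ∫ x in κ..b, g x * W x := by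
      rw [← intervalIntegral.integral_const_mul]
      exact intervalIntegral.integral_congr fun x _ => by ring
    have e2 : ∫ c in κ..cu, g c * (R (istar 1 c) - γ (istar 1 c) * c)
        = ∫ c in κ..cu, g c * W c :=
      intervalIntegral.integral_congr fun c _ => by rw [hWeq c]
    rw [e1, e2]
    apply mul_le_mul_of_nonneg_left _ hβ0.le
    rw [← intervalIntegral.integral_add_adjacent_intervals (hgW κ cu) (hgW cu b)]
    have h5 : 0 ≤ ∫ x in cu..b, g x * W x :=
      intervalIntegral.integral_nonneg hcub fun u _ => mul_nonneg (hg u) (hW0 u)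
    linarith
  -- rewrite the a..b integral by substitution
  have hArev : ∫ x in a..b, (α * g (α * x)) * W x = ∫ c in cl..cu, g c * W (c / α) := by
    have hsub := intervalIntegral.integral_comp_mul_left
      (fun c => g c * W (c / α)) hαne (a := a) (b := b)
    simp only [hαa, hαb, smul_eq_mul, mul_div_cancel_left₀ _ hαne] at hsub
    have e1 : ∫ x in a..b, (α * g (α * x)) * W x = α * ∫ x in a..b, g (α * x) * W x := by
      rw [← intervalIntegral.integral_const_mul]
      exact intervalIntegral.integral_congr fun x _ => by ring
    rw [e1, hsub]
    field_simp
  -- integrability of the revenue integrand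
  have hRαmeas : Measurable fun c => R (istar α c) := by
    have h1 : Measurable fun c => (istar α c : ℕ) := hmeas α
    have h2 : (fun c => R (istar α c)) = (fun k : ℕ => if h : k < n + 1 then R ⟨k, h⟩ else 0)
        ∘ (fun c => (istar α c : ℕ)) := by
      funext c
      simp only [Function.comp_apply, (istar α c).isLt, dif_pos, Fin.eta]
    rw [h2]
    exact measurable_from_top.comp h1
  have intR : IntervalIntegrable (fun c => g c * R (istar α c)) volume cl cu := by
    apply IntervalIntegrable.mono_fun' (g := fun c => g c * R (Fin.last n))
      ((hgi cl cu).mul_const _)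
      (((hgi cl cu).aestronglyMeasurable.mono_set ?_).mul hRαmeas.aestronglyMeasurable.restrict)
    · filter_upwards with c
      simp only [Pi.mul_apply, Real.norm_eq_abs, abs_mul]
      rw [abs_of_nonneg (hg c), abs_of_nonneg (hRnn _)]
      exact mul_le_mul_of_nonneg_left (hR.monotone (Fin.le_last _)) (hg c)
    · rw [uIoc_of_le hclu.le]
  have intW : IntervalIntegrable (fun c => g c * W (c / α)) volume cl cu :=
    (hgi cl cu).mul_continuousOn (hWcont.comp (continuous_id.div_const α)).continuousOn
  -- revenue bound
  have hrev : ∫ c in cl..cu, g c * W (c / α) ≤ ∫ c in cl..cu, g c * R (istar α c) := by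
    apply intervalIntegral.integral_mono_on hclu.le intW intR
    intro c hc
    have hc0 : 0 ≤ c := le_trans hcl hc.1
    have hbound : W (c / α) ≤ R (istar α c) := by
      rw [hWd]
      apply Finset.sup'_le
      intro j _
      have h1 := histar α c j
      have h2 : 0 ≤ γ (istar α c) * c := mul_nonneg (hγnn _) hc0
      have h3 : α * (R j - γ j * (c / α)) ≤ α * R (istar α c) := by
        have : α * (R j - γ j * (c / α)) = α * R j - γ j * c := by field_simp
        rw [this]
        nlinarith
      exact le_of_mul_le_mul_left h3 hα0
    exact mul_le_mul_of_nonneg_left hbound (hg c)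
  -- final assembly
  have hRHS : ∫ c in cl..cu, g c * ((1 - α) * R (istar α c))
      = (1 - α) * ∫ c in cl..cu, g c * R (istar α c) := by
    rw [← intervalIntegral.integral_const_mul]
    exact intervalIntegral.integral_congr fun c _ => by ring
  rw [hRHS]
  have hchain : β * η * (∫ c in cl..cu, g c * (R (istar 1 c) - γ (istar 1 c) * c))
      ≤ ∫ c in cl..cu, g c * R (istar α c) := by
    calc β * η * (∫ c in cl..cu, g c * (R (istar 1 c) - γ (istar 1 c) * c))
        = β * (η * ∫ c in cl..cu, g c * (R (istar 1 c) - γ (istar 1 c) * c)) := by ring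
      _ ≤ β * ∫ c in κ..cu, g c * (R (istar 1 c) - γ (istar 1 c) * c) :=
          mul_le_mul_of_nonneg_left hsmall hβ0.le
      _ ≤ ∫ x in κ..b, (β * g x) * W x := htail
      _ ≤ ∫ x in a..b, (α * g (α * x)) * W x := hcmp
      _ = ∫ c in cl..cu, g c * W (c / α) := hArev
      _ ≤ ∫ c in cl..cu, g c * R (istar α c) := hrev
  calc (1 - α) * β * η * (∫ c in cl..cu, g c * (R (istar 1 c) - γ (istar 1 c) * c))
      = (1 - α) * (β * η * ∫ c in cl..cu, g c * (R (istar 1 c) - γ (istar 1 c) * c)) := by ring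
    _ ≤ (1 - α) * ∫ c in cl..cu, g c * R (istar α c) :=
        mul_le_mul_of_nonneg_left hchain (by linarith)
end

section
/- Let q, α, η ∈ (0,1) and let c_q be the q-th quantile of the type distribution G (i.e., G(c_q) = q). If the instance satisfies the (c_q/α, η)-small-tail assumption (the welfare from types in [c_q/α, c̄] is at least η times the total optimal welfare), then the linear contract with parameter α achieves expected revenue at least (1−α)·η·q times the optimal expected welfare. -/
open MeasureTheory

open intervalIntegral

set_option maxHeartbeats 1000000

lemma abel_compare (a b : ℝ) (hab : a ≤ b) (f₁ f₂ W : ℝ → ℝ)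
    (hf₁ : ∀ x y : ℝ, IntervalIntegrable f₁ volume x y)
    (hf₂ : ∀ x y : ℝ, IntervalIntegrable f₂ volume x y)
    (hf₁W : ∀ x y : ℝ, IntervalIntegrable (fun u => f₁ u * W u) volume x y)
    (hf₂W : ∀ x y : ℝ, IntervalIntegrable (fun u => f₂ u * W u) volume x y)
    (hf₁0 : ∀ u, 0 ≤ f₁ u) (hf₂0 : ∀ u, 0 ≤ f₂ u)
    (hW : Antitone W) (hW0 : 0 ≤ W b)
    (K : ℝ) (hK : 0 ≤ K)
    (hdom : ∀ t, a ≤ t → t ≤ b → (∫ u in a..t, f₂ u) ≤ K + ∫ u in a..t, f₁ u) :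
    (∫ u in a..b, f₂ u * W u) ≤ K * W a + ∫ u in a..b, f₁ u * W u := by
  rcases eq_or_lt_of_le hab with rfl | hab'
  · simp only [integral_same]
    nlinarith [mul_nonneg hK hW0]
  -- main case
  have hC : 0 ≤ W a - W b := sub_nonneg.2 (hW hab)
  suffices H : ∀ ε : ℝ, 0 < ε →
      (∫ u in a..b, f₂ u * W u) ≤ (K * W a + ∫ u in a..b, f₁ u * W u) + (W a - W b) * ε by
    refine le_of_forall_pos_le_add fun δ hδ => ?_
    have h1 := H (δ / ((W a - W b) + 1)) (div_pos hδ (by linarith))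
    have hs : 0 ≤ δ / ((W a - W b) + 1) := le_of_lt (div_pos hδ (by linarith))
    have heq : ((W a - W b) + 1) * (δ / ((W a - W b) + 1)) = δ := by
      field_simp
    nlinarith
  intro ε hε
  -- uniform continuity of the primitive of f₁
  set Φ : ℝ → ℝ := fun x => ∫ u in a..x, f₁ u with hΦdef
  have hΦc : Continuous Φ := intervalIntegral.continuous_primitive (fun x y => hf₁ x y) a
  have hu : UniformContinuousOn Φ (Set.Icc a b) :=
    isCompact_Icc.uniformContinuousOn_of_continuous hΦc.continuousOn
  rw [Metric.uniformContinuousOn_iff] at hu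
  obtain ⟨δ, hδ0, hδ⟩ := hu ε hε
  obtain ⟨k, hk⟩ := exists_nat_gt (max 1 ((b - a) / δ))
  have hk1 : (1:ℝ) < k := lt_of_le_of_lt (le_max_left _ _) hk
  have hkR : (0:ℝ) < k := by linarith
  have hstep : (b - a) / (k:ℝ) < δ := by
    rw [div_lt_iff₀ hkR]
    have h3 : (b - a) / δ < k := lt_of_le_of_lt (le_max_right _ _) hk
    rw [div_lt_iff₀ hδ0] at h3
    linarith
  set T : ℕ → ℝ := fun j => a + (b - a) * j / k with hTdef
  have hT0 : T 0 = a := by simp [hTdef]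
  have hTk : T k = b := by
    simp only [hTdef]
    rw [mul_div_assoc, div_self hkR.ne', mul_one]
    ring
  have hTstep : ∀ j : ℕ, T (j+1) - T j = (b - a) / k := by
    intro j
    simp only [hTdef]
    push_cast
    ring
  clear_value T
  have hTmono : ∀ j : ℕ, T j ≤ T (j+1) := by
    intro j
    have h5 := hTstep j
    have h4 : 0 ≤ (b - a) / (k:ℝ) := div_nonneg (by linarith) hkR.le
    linarith
  have hTmonole : Monotone T := monotone_nat_of_le_succ hTmono
  have hTmem : ∀ j : ℕ, j ≤ k → T j ∈ Set.Icc a b := by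
    intro j hj
    constructor
    · have := hTmonole (Nat.zero_le j); rw [hT0] at this; exact this
    · have := hTmonole hj; rw [hTk] at this; exact this
  set φ : ℕ → ℝ := fun j => ∫ u in T j..T (j+1), f₁ u with hφdef
  set ψ : ℕ → ℝ := fun j => ∫ u in T j..T (j+1), f₂ u with hψdef
  have hφ0 : ∀ j, 0 ≤ φ j := fun j =>
    integral_nonneg (hTmono j) (fun u _ => hf₁0 u)
  have hψ0 : ∀ j, 0 ≤ ψ j := fun j =>
    integral_nonneg (hTmono j) (fun u _ => hf₂0 u)
  have hΦadd : ∀ j : ℕ, Φ (T j) + φ j = Φ (T (j+1)) := fun j =>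
    integral_add_adjacent_intervals (hf₁ a (T j)) (hf₁ (T j) (T (j+1)))
  have hφε : ∀ j : ℕ, j < k → φ j ≤ ε := by
    intro j hj
    have hmem1 := hTmem j hj.le
    have hmem2 := hTmem (j+1) hj
    have hdist : dist (T (j+1)) (T j) < δ := by
      rw [Real.dist_eq, hTstep j, abs_of_nonneg (div_nonneg (by linarith) hkR.le)]
      exact hstep
    have := hδ (T (j+1)) hmem2 (T j) hmem1 hdist
    rw [Real.dist_eq] at this
    have h5 : φ j = Φ (T (j+1)) - Φ (T j) := by linarith [hΦadd j]
    calc φ j = Φ (T (j+1)) - Φ (T j) := h5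
    _ ≤ |Φ (T (j+1)) - Φ (T j)| := le_abs_self _
    _ ≤ ε := this.le
  -- partial sums of integrals
  set Ψs : ℕ → ℝ := fun m => ∫ u in a..T m, f₂ u with hΨsdef
  set Φs : ℕ → ℝ := fun m => ∫ u in a..T m, f₁ u with hΦsdef
  have hΨs0 : Ψs 0 = 0 := by simp [hΨsdef, hT0]
  have hΦs0 : Φs 0 = 0 := by simp [hΦsdef, hT0]
  have hΨsucc : ∀ m : ℕ, Ψs (m+1) = Ψs m + ψ m := fun m =>
    (integral_add_adjacent_intervals (hf₂ a (T m)) (hf₂ (T m) (T (m+1)))).symm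
  have hΦsucc : ∀ m : ℕ, Φs (m+1) = Φs m + φ m := fun m =>
    (integral_add_adjacent_intervals (hf₁ a (T m)) (hf₁ (T m) (T (m+1)))).symm
  have hΨΦ : ∀ m : ℕ, m ≤ k → Ψs m ≤ K + Φs m := by
    intro m hm
    exact hdom (T m) (hTmem m hm).1 (hTmem m hm).2
  -- the key discrete claim
  have Q : ∀ m : ℕ, m ≤ k →
      ∑ j ∈ Finset.range m, W (T j) * ψ j ≤
        (∑ j ∈ Finset.range m, W (T (j+1)) * φ j)
          + (K + ε) * (W a - W (T m)) + W (T m) * (Ψs m - Φs m) := by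
    intro m
    induction m with
    | zero =>
      intro _
      simp [hT0, hΨs0, hΦs0]
    | succ m ih =>
      intro hm
      have ihm := ih (Nat.le_of_succ_le hm)
      rw [Finset.sum_range_succ, Finset.sum_range_succ, hΨsucc m, hΦsucc m]
      have hD : 0 ≤ W (T m) - W (T (m+1)) := sub_nonneg.2 (hW (hTmono m))
      have hdomm := hΨΦ (m+1) hm
      rw [hΨsucc m, hΦsucc m] at hdomm
      have hφm : φ m ≤ ε := hφε m hm
      have hWa : W (T (m+1)) ≤ W a := hW (hTmem (m+1) hm).1
      nlinarith [mul_nonneg hD (by linarith : 0 ≤ K + ε - (Ψs m + ψ m) + Φs m)]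
  -- per-piece bounds
  have hpiece₁ : ∀ j : ℕ, W (T (j+1)) * φ j ≤ ∫ u in T j..T (j+1), f₁ u * W u := by
    intro j
    have h6 : (∫ u in T j..T (j+1), f₁ u * W (T (j+1))) ≤
        ∫ u in T j..T (j+1), f₁ u * W u := by
      apply integral_mono_on (hTmono j) ((hf₁ _ _).mul_const _) (hf₁W _ _)
      intro x hx
      exact mul_le_mul_of_nonneg_left (hW hx.2) (hf₁0 x)
    rw [intervalIntegral.integral_mul_const] at h6
    linarith [h6]
  have hpiece₂ : ∀ j : ℕ, (∫ u in T j..T (j+1), f₂ u * W u) ≤ W (T j) * ψ j := by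
    intro j
    have h6 : (∫ u in T j..T (j+1), f₂ u * W u) ≤
        ∫ u in T j..T (j+1), f₂ u * W (T j) := by
      apply integral_mono_on (hTmono j) (hf₂W _ _) ((hf₂ _ _).mul_const _)
      intro x hx
      exact mul_le_mul_of_nonneg_left (hW hx.1) (hf₂0 x)
    rw [intervalIntegral.integral_mul_const] at h6
    linarith [h6]
  -- sum splits
  have hsplit₁ : ∑ j ∈ Finset.range k, ∫ u in T j..T (j+1), f₁ u * W u
      = ∫ u in a..b, f₁ u * W u := by
    have := intervalIntegral.sum_integral_adjacent_intervals
      (μ := volume) (a := T) (n := k) (fun j _ => hf₁W _ _)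
    rw [hT0, hTk] at this; exact this
  have hsplit₂ : ∑ j ∈ Finset.range k, ∫ u in T j..T (j+1), f₂ u * W u
      = ∫ u in a..b, f₂ u * W u := by
    have := intervalIntegral.sum_integral_adjacent_intervals
      (μ := volume) (a := T) (n := k) (fun j _ => hf₂W _ _)
    rw [hT0, hTk] at this; exact this
  -- put it together
  have hkk : (k:ℕ) ≤ k := le_refl _
  have hQk := Q k hkk
  have hΨΦk := hΨΦ k hkk
  have hsum₁ : ∑ j ∈ Finset.range k, W (T (j+1)) * φ j ≤ ∫ u in a..b, f₁ u * W u := by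
    rw [← hsplit₁]
    exact Finset.sum_le_sum fun j _ => hpiece₁ j
  have hsum₂ : (∫ u in a..b, f₂ u * W u) ≤ ∑ j ∈ Finset.range k, W (T j) * ψ j := by
    rw [← hsplit₂]
    exact Finset.sum_le_sum fun j _ => hpiece₂ j
  rw [hTk] at hQk
  nlinarith [mul_nonneg hW0 (by linarith : 0 ≤ K - (Ψs k - Φs k)), hQk, hsum₁, hsum₂]

lemma bdd_meas_mul_intervalIntegrable (F B : ℝ → ℝ)
    (hF : ∀ x y : ℝ, IntervalIntegrable F volume x y)
    (hB : Measurable B) (hbd : ∃ C, ∀ u, ‖B u‖ ≤ C) :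
    ∀ x y : ℝ, IntervalIntegrable (fun u => B u * F u) volume x y := by
  intro x y
  have h := hF x y
  rw [intervalIntegrable_iff] at h ⊢
  obtain ⟨C, hC⟩ := hbd
  exact h.bdd_mul hB.aestronglyMeasurable (ae_of_all _ hC)

lemma fin_comp_measurable {n : ℕ} (v : Fin (n+1) → ℝ) (J : ℝ → Fin (n+1))
    (hJ : Measurable fun c => (J c : ℕ)) : Measurable fun c => v (J c) := by
  have h : (fun c => v (J c))
      = (fun m : ℕ => v ⟨m % (n+1), Nat.mod_lt _ n.succ_pos⟩) ∘ (fun c => (J c : ℕ)) := by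
    funext c
    simp only [Function.comp_apply]
    congr 1
    exact (Fin.eq_of_val_eq (by simp [Nat.mod_eq_of_lt (J c).isLt])).symm
  rw [h]
  exact measurable_from_nat.comp hJ

lemma fin_comp_bdd {n : ℕ} (v : Fin (n+1) → ℝ) (J : ℝ → Fin (n+1)) :
    ∃ C, ∀ u, ‖v (J u)‖ ≤ C := by
  obtain ⟨M, hM⟩ := Finite.exists_le (fun j : Fin (n+1) => ‖v j‖)
  exact ⟨M, fun u => hM (J u)⟩


/-- Main theorem: if `c_q` is the `q`-quantile of `G` and the instance
satisfies the `(c_q/α, η)`-small-tail assumption, then the linear contract with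
parameter `α` earns expected revenue at least `(1-α)·η·q` times the optimal welfare. -/
theorem linear_contract_approx_quantile
    (n : ℕ) (γ R : Fin (n + 1) → ℝ)
    (hγ0 : γ 0 = 0) (hγ : StrictMono γ) (hR0 : R 0 = 0) (hR : StrictMono R)
    (cl cu : ℝ) (hcl : 0 ≤ cl) (hclu : cl < cu)
    (g G : ℝ → ℝ) (hg : ∀ c, 0 ≤ g c)
    (hgi : ∀ a b : ℝ, IntervalIntegrable g volume a b)
    (hG : ∀ c, G c = ∫ x in cl..c, g x) (hG1 : G cu = 1)
    (q α η : ℝ) (hq0 : 0 < q) (hq1 : q < 1) (hα0 : 0 < α) (hα1 : α < 1)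
    (hη0 : 0 < η) (hη1 : η < 1)
    (cq : ℝ) (hcq : G cq = q) (hcql : cl ≤ cq) (hcqu : cq / α ≤ cu)
    (istar : ℝ → ℝ → Fin (n + 1))
    (histar : ∀ t c j, t * R j - γ j * c ≤ t * R (istar t c) - γ (istar t c) * c)
    (hmeas : ∀ t, Measurable fun c => (istar t c : ℕ))
    -- (c_q/α, η)-small-tail assumption
    (hsmall : η * (∫ c in cl..cu, g c * (R (istar 1 c) - γ (istar 1 c) * c))
        ≤ ∫ c in (cq / α)..cu, g c * (R (istar 1 c) - γ (istar 1 c) * c)) :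
    (1 - α) * η * q * (∫ c in cl..cu, g c * (R (istar 1 c) - γ (istar 1 c) * c))
      ≤ ∫ c in cl..cu, g c * ((1 - α) * R (istar α c)) := by
  have hα : α ≠ 0 := ne_of_gt hα0
  have hγnn : ∀ j : Fin (n+1), 0 ≤ γ j := by
    intro j
    rcases eq_or_ne j 0 with rfl | hj
    · exact le_of_eq hγ0.symm
    · have h := hγ.monotone (Fin.zero_le j)
      rw [hγ0] at h; exact h
  -- welfare facts
  have hW0' : ∀ c : ℝ, 0 ≤ R (istar 1 c) - γ (istar 1 c) * c := by
    intro c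
    have h := histar 1 c 0
    simp only [hR0, hγ0, one_mul, zero_mul, mul_zero, sub_zero, zero_sub] at h
    linarith
  have hWanti : Antitone (fun c : ℝ => R (istar 1 c) - γ (istar 1 c) * c) := by
    intro u v huv
    simp only
    have h1 := histar 1 u (istar 1 v)
    have h2 : γ (istar 1 v) * u ≤ γ (istar 1 v) * v :=
      mul_le_mul_of_nonneg_left huv (hγnn _)
    simp only [one_mul] at h1
    linarith
  -- measurability
  have hdiv : Measurable fun c : ℝ => c / α := measurable_id.div_const α
  have hRB1 : Measurable fun c => R (istar 1 c) := fin_comp_measurable R _ (hmeas 1)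
  have hγB1 : Measurable fun c => γ (istar 1 c) := fin_comp_measurable γ _ (hmeas 1)
  have hRB1' : Measurable fun c => R (istar 1 (c/α)) :=
    (fin_comp_measurable R _ (hmeas 1)).comp hdiv
  have hγB1' : Measurable fun c => γ (istar 1 (c/α)) :=
    (fin_comp_measurable γ _ (hmeas 1)).comp hdiv
  have hRBα : Measurable fun c => R (istar α c) := fin_comp_measurable R _ (hmeas α)
  -- integrability of the various integrands
  have hgα : ∀ x y : ℝ, IntervalIntegrable (fun u => g (α*u)) volume x y := by
    intro x y
    have h := (hgi (α*x) (α*y)).comp_mul_left (c := α)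
    rwa [mul_div_cancel_left₀ _ hα, mul_div_cancel_left₀ _ hα] at h
  have hI_gW : ∀ x y : ℝ, IntervalIntegrable
      (fun c => g c * (R (istar 1 c) - γ (istar 1 c) * c)) volume x y := by
    intro x y
    have h1 : IntervalIntegrable (fun c => R (istar 1 c) * g c) volume x y :=
      bdd_meas_mul_intervalIntegrable g _ hgi hRB1 (fin_comp_bdd R _) x y
    have h3 : IntervalIntegrable (fun c => γ (istar 1 c) * (c * g c)) volume x y :=
      bdd_meas_mul_intervalIntegrable _ _
        (fun x y => (hgi x y).continuousOn_mul continuousOn_id) hγB1 (fin_comp_bdd γ _) x y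
    have h4 := h1.sub h3
    have heq : (fun c => R (istar 1 c) * g c - γ (istar 1 c) * (c * g c))
        = fun c => g c * (R (istar 1 c) - γ (istar 1 c) * c) := by funext c; ring
    rwa [heq] at h4
  have hI_gWα : ∀ x y : ℝ, IntervalIntegrable
      (fun c => g c * (R (istar 1 (c/α)) - γ (istar 1 (c/α)) * (c/α))) volume x y := by
    intro x y
    have h1 : IntervalIntegrable (fun c => R (istar 1 (c/α)) * g c) volume x y :=
      bdd_meas_mul_intervalIntegrable g _ hgi hRB1' (fin_comp_bdd R _) x y
    have h3 : IntervalIntegrable (fun c => γ (istar 1 (c/α)) * ((c/α) * g c)) volume x y :=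
      bdd_meas_mul_intervalIntegrable _ _
        (fun x y => (hgi x y).continuousOn_mul ((continuous_id.div_const α).continuousOn))
        hγB1' (fin_comp_bdd γ _) x y
    have h4 := h1.sub h3
    have heq : (fun c => R (istar 1 (c/α)) * g c - γ (istar 1 (c/α)) * ((c/α) * g c))
        = fun c => g c * (R (istar 1 (c/α)) - γ (istar 1 (c/α)) * (c/α)) := by funext c; ring
    rwa [heq] at h4
  have hI_gR : ∀ x y : ℝ, IntervalIntegrable
      (fun c => g c * R (istar α c)) volume x y := by
    intro x y
    have h1 : IntervalIntegrable (fun c => R (istar α c) * g c) volume x y :=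
      bdd_meas_mul_intervalIntegrable g _ hgi hRBα (fin_comp_bdd R _) x y
    have heq : (fun c => R (istar α c) * g c) = fun c => g c * R (istar α c) := by
      funext c; ring
    rwa [heq] at h1
  have hI_f1 : ∀ x y : ℝ, IntervalIntegrable (fun u => α * g (α*u)) volume x y :=
    fun x y => (hgα x y).const_mul α
  have hI_f1W : ∀ x y : ℝ, IntervalIntegrable
      (fun u => (α * g (α*u)) * (R (istar 1 u) - γ (istar 1 u) * u)) volume x y := by
    intro x y
    have h1 : IntervalIntegrable (fun u => R (istar 1 u) * (α * g (α*u))) volume x y :=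
      bdd_meas_mul_intervalIntegrable _ _ hI_f1 hRB1 (fin_comp_bdd R _) x y
    have h3 : IntervalIntegrable (fun u => γ (istar 1 u) * (u * (α * g (α*u)))) volume x y :=
      bdd_meas_mul_intervalIntegrable _ _
        (fun x y => (hI_f1 x y).continuousOn_mul continuousOn_id) hγB1 (fin_comp_bdd γ _) x y
    have h4 := h1.sub h3
    have heq : (fun u => R (istar 1 u) * (α * g (α*u)) - γ (istar 1 u) * (u * (α * g (α*u))))
        = fun u => (α * g (α*u)) * (R (istar 1 u) - γ (istar 1 u) * u) := by funext u; ring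
    rwa [heq] at h4
  have hI_qgW : ∀ x y : ℝ, IntervalIntegrable
      (fun u => (q * g u) * (R (istar 1 u) - γ (istar 1 u) * u)) volume x y := by
    intro x y
    have h1 := (hI_gW x y).const_mul q
    have heq : (fun u => q * (g u * (R (istar 1 u) - γ (istar 1 u) * u)))
        = fun u => (q * g u) * (R (istar 1 u) - γ (istar 1 u) * u) := by funext u; ring
    rwa [heq] at h1
  -- facts about G
  have hGsub : ∀ x y : ℝ, G y - G x = ∫ u in x..y, g u := by
    intro x y
    rw [hG x, hG y]
    exact integral_interval_sub_left (hgi cl y) (hgi cl x)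
  have hGmono : ∀ x y : ℝ, x ≤ y → G x ≤ G y := by
    intro x y hxy
    have h := hGsub x y
    have h2 : 0 ≤ ∫ u in x..y, g u := integral_nonneg hxy (fun u _ => hg u)
    linarith
  have hGcl : G cl = 0 := by rw [hG]; simp
  -- ordering facts
  have hcq0 : 0 ≤ cq := le_trans hcl hcql
  have ha_lb : cq ≤ cq / α := by rw [le_div_iff₀ hα0]; nlinarith
  have hl'a : cl / α ≤ cq / α := by gcongr
  have hcu0 : 0 < cu := lt_of_le_of_lt hcl hclu
  have hbb' : cu ≤ cu / α := by rw [le_div_iff₀ hα0]; nlinarith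
  have hl'b : cl / α ≤ cu := le_trans hl'a hcqu
  -- value of ∫ f₁ over intervals
  have hF1int : ∀ x y : ℝ, (∫ u in x..y, α * g (α*u)) = G (α*y) - G (α*x) := by
    intro x y
    rw [intervalIntegral.integral_const_mul, ← smul_eq_mul,
      intervalIntegral.smul_integral_comp_mul_left g α, ← hGsub]
  have e_acl : α * (cl/α) = cl := by field_simp
  have e_acq : α * (cq/α) = cq := by field_simp
  have hKval : (∫ u in (cl/α)..(cq/α), α * g (α*u)) = q := by
    rw [hF1int, e_acl, e_acq, hGcl, hcq, sub_zero]
  -- Step 1 : pointwise revenue bound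
  have hstep1 : (∫ c in cl..cu, g c * (R (istar 1 (c/α)) - γ (istar 1 (c/α)) * (c/α)))
      ≤ ∫ c in cl..cu, g c * R (istar α c) := by
    apply integral_mono_on hclu.le (hI_gWα cl cu) (hI_gR cl cu)
    intro c hc
    apply mul_le_mul_of_nonneg_left _ (hg c)
    have h1 := histar α c (istar 1 (c/α))
    have h2 : 0 ≤ γ (istar α c) * c := mul_nonneg (hγnn _) (le_trans hcl hc.1)
    have h3 : α * (R (istar 1 (c/α)) - γ (istar 1 (c/α)) * (c/α))
        = α * R (istar 1 (c/α)) - γ (istar 1 (c/α)) * c := by field_simp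
    have h4 : α * (R (istar 1 (c/α)) - γ (istar 1 (c/α)) * (c/α)) ≤ α * R (istar α c) := by
      linarith
    exact le_of_mul_le_mul_left h4 hα0
  -- Step 2 : change of variables
  have hstep2 : (∫ c in cl..cu, g c * (R (istar 1 (c/α)) - γ (istar 1 (c/α)) * (c/α)))
      = ∫ u in (cl/α)..(cu/α), (α * g (α*u)) * (R (istar 1 u) - γ (istar 1 u) * u) := by
    have h1 : Set.EqOn (fun c => g c * (R (istar 1 (c/α)) - γ (istar 1 (c/α)) * (c/α)))
        (fun c => (fun u => g (α*u) * (R (istar 1 u) - γ (istar 1 u) * u)) (c/α))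
        (Set.uIcc cl cu) := by
      intro c _
      simp only
      rw [show α * (c/α) = c by field_simp]
    rw [intervalIntegral.integral_congr h1,
      intervalIntegral.integral_comp_div (fun u => g (α*u) * (R (istar 1 u) - γ (istar 1 u) * u)) hα,
      smul_eq_mul, ← intervalIntegral.integral_const_mul]
    apply intervalIntegral.integral_congr
    intro u _
    simp only
    ring
  -- Step 3 : drop the top piece
  have hTopNonneg : 0 ≤ ∫ u in cu..(cu/α), (α * g (α*u)) * (R (istar 1 u) - γ (istar 1 u) * u) :=
    integral_nonneg hbb' (fun u _ => mul_nonneg (mul_nonneg hα0.le (hg _)) (hW0' u))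
  have hsplitTop : (∫ u in (cl/α)..cu, (α * g (α*u)) * (R (istar 1 u) - γ (istar 1 u) * u))
      + (∫ u in cu..(cu/α), (α * g (α*u)) * (R (istar 1 u) - γ (istar 1 u) * u))
      = ∫ u in (cl/α)..(cu/α), (α * g (α*u)) * (R (istar 1 u) - γ (istar 1 u) * u) :=
    integral_add_adjacent_intervals (hI_f1W _ _) (hI_f1W _ _)
  have hsplitMid : (∫ u in (cl/α)..(cq/α), (α * g (α*u)) * (R (istar 1 u) - γ (istar 1 u) * u))
      + (∫ u in (cq/α)..cu, (α * g (α*u)) * (R (istar 1 u) - γ (istar 1 u) * u))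
      = ∫ u in (cl/α)..cu, (α * g (α*u)) * (R (istar 1 u) - γ (istar 1 u) * u) :=
    integral_add_adjacent_intervals (hI_f1W _ _) (hI_f1W _ _)
  -- Step 4 : head piece dominates q * W(cq/α)
  have h5 : q * (R (istar 1 (cq/α)) - γ (istar 1 (cq/α)) * (cq/α))
      ≤ ∫ u in (cl/α)..(cq/α), (α * g (α*u)) * (R (istar 1 u) - γ (istar 1 u) * u) := by
    have h6 : (∫ u in (cl/α)..(cq/α),
          (α * g (α*u)) * (R (istar 1 (cq/α)) - γ (istar 1 (cq/α)) * (cq/α)))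
        ≤ ∫ u in (cl/α)..(cq/α), (α * g (α*u)) * (R (istar 1 u) - γ (istar 1 u) * u) := by
      apply integral_mono_on hl'a ((hI_f1 _ _).mul_const _) (hI_f1W _ _)
      intro x hx
      exact mul_le_mul_of_nonneg_left (hWanti hx.2) (mul_nonneg hα0.le (hg _))
    rw [intervalIntegral.integral_mul_const, hKval] at h6
    linarith
  -- Step 5 : Abel comparison on the tail
  have hdom' : ∀ t, cq/α ≤ t → t ≤ cu →
      (∫ u in (cq/α)..t, q * g u) ≤ q + ∫ u in (cq/α)..t, α * g (α*u) := by
    intro t h1t h2t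
    rw [intervalIntegral.integral_const_mul, ← hGsub (cq/α) t, hF1int, e_acq, hcq]
    have hGt1 : G t ≤ 1 := hG1 ▸ hGmono t cu h2t
    have hGa0 : 0 ≤ G (cq/α) := hGcl ▸ hGmono cl (cq/α) (le_trans hcql ha_lb)
    have hGαt : q ≤ G (α*t) := by
      rw [← hcq]
      apply hGmono
      calc cq = α * (cq/α) := e_acq.symm
      _ ≤ α * t := mul_le_mul_of_nonneg_left h1t hα0.le
    nlinarith [mul_nonneg hq0.le (by linarith : (0:ℝ) ≤ 1 - G t + G (cq/α))]
  have habel := abel_compare (cq/α) cu hcqu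
    (fun u => α * g (α*u)) (fun u => q * g u)
    (fun c => R (istar 1 c) - γ (istar 1 c) * c)
    hI_f1 (fun x y => (hgi x y).const_mul q) hI_f1W hI_qgW
    (fun u => mul_nonneg hα0.le (hg _)) (fun u => mul_nonneg hq0.le (hg _))
    hWanti (hW0' cu) q hq0.le hdom'
  -- tail rewriting
  have hTailEq : (∫ u in (cq/α)..cu, (q * g u) * (R (istar 1 u) - γ (istar 1 u) * u))
      = q * ∫ c in (cq/α)..cu, g c * (R (istar 1 c) - γ (istar 1 c) * c) := by
    rw [← intervalIntegral.integral_const_mul]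
    apply intervalIntegral.integral_congr
    intro u _
    simp only
    ring
  -- final assembly
  have hgoalRHS : (∫ c in cl..cu, g c * ((1-α) * R (istar α c)))
      = (1-α) * ∫ c in cl..cu, g c * R (istar α c) := by
    rw [← intervalIntegral.integral_const_mul]
    apply intervalIntegral.integral_congr
    intro c _
    simp only
    ring
  rw [hgoalRHS]
  have hsmall' : q * (η * (∫ c in cl..cu, g c * (R (istar 1 c) - γ (istar 1 c) * c)))
      ≤ q * ∫ c in (cq/α)..cu, g c * (R (istar 1 c) - γ (istar 1 c) * c) :=
    mul_le_mul_of_nonneg_left hsmall hq0.le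
  have hchain : q * (η * (∫ c in cl..cu, g c * (R (istar 1 c) - γ (istar 1 c) * c)))
      ≤ ∫ c in cl..cu, g c * R (istar α c) := by
    linarith [hsmall', hTailEq, habel, h5, hsplitMid, hsplitTop, hTopNonneg, hstep2, hstep1]
  have h1α : (0:ℝ) ≤ 1 - α := by linarith
  calc (1 - α) * η * q * (∫ c in cl..cu, g c * (R (istar 1 c) - γ (istar 1 c) * c))
      = (1 - α) * (q * (η * (∫ c in cl..cu, g c * (R (istar 1 c) - γ (istar 1 c) * c)))) := by
        ring
    _ ≤ (1 - α) * ∫ c in cl..cu, g c * R (istar α c) :=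
        mul_le_mul_of_nonneg_left hchain h1α
end

section
/- If a distribution G has non-increasing density g on [c̲, ∞) with c̲ ≥ 0, then for every κ > 1 and every c ≥ κ·c̲, G((κ+1)/(2κ) · c) ≥ (1/2)·G(c). That is, G is ((κ+1)/(2κ), 1/2, κc̲)-slowly-increasing. -/
open MeasureTheory

/-- a distribution with non-increasing density `g` on `[c̲, ∞)`, `c̲ ≥ 0`,
is `((κ+1)/(2κ), 1/2, κ·c̲)`-slowly-increasing for every `κ > 1`:
`G((κ+1)/(2κ)·c) ≥ (1/2)·G(c)` for all `c ≥ κ·c̲`. -/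
theorem nonincreasing_density_slowly_increasing
    (cl : ℝ) (hcl : 0 ≤ cl)
    (g G : ℝ → ℝ) (hg : ∀ c, 0 ≤ g c)
    (hmono : AntitoneOn g (Set.Ici cl))
    (hgi : ∀ a b : ℝ, IntervalIntegrable g volume a b)
    (hG : ∀ c, G c = ∫ x in cl..c, g x)
    (κ : ℝ) (hκ : 1 < κ) :
    ∀ c, κ * cl ≤ c → (1 / 2) * G c ≤ G ((κ + 1) / (2 * κ) * c) := by
  intro c hc
  have hκ0 : (0:ℝ) < κ := by linarith
  set a : ℝ := (κ + 1) / (2 * κ) * c with ha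
  have hc0 : 0 ≤ c := le_trans (by positivity) hc
  have hclc : cl ≤ c / κ := by
    rw [le_div_iff₀ hκ0]; linarith [hc]
  have h2ac : 2 * a - c = c / κ := by
    rw [ha]; field_simp; ring
  have hcl2 : cl ≤ 2 * a - c := by rw [h2ac]; exact hclc
  have hac : a ≤ c := by
    have : 2 * a - c ≤ a := by
      have : c / κ ≤ c := by
        rw [div_le_iff₀ hκ0]; nlinarith
      linarith [h2ac ▸ this]
    linarith
  have h2aa : 2 * a - c ≤ a := by linarith
  have hcla : cl ≤ a := le_trans hcl2 h2aa
  -- bound: ∫_a^c g ≤ (c - a) * g a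
  have hub : (∫ x in a..c, g x) ≤ (c - a) * g a := by
    have := intervalIntegral.integral_mono_on hac (hgi a c)
      (intervalIntegrable_const (c := g a))
      (fun x hx => hmono (Set.mem_Ici.mpr hcla) (Set.mem_Ici.mpr (le_trans hcla hx.1)) hx.1)
    simpa [intervalIntegral.integral_const, smul_eq_mul, mul_comm] using this
  -- bound: (c - a) * g a ≤ ∫_{2a-c}^a g
  have hlb : (c - a) * g a ≤ ∫ x in (2 * a - c)..a, g x := by
    have := intervalIntegral.integral_mono_on h2aa
      (intervalIntegrable_const (c := g a)) (hgi (2 * a - c) a)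
      (fun x hx => hmono (Set.mem_Ici.mpr (le_trans hcl2 hx.1)) (Set.mem_Ici.mpr hcla) hx.2)
    have h' : (a - (2 * a - c)) * g a ≤ ∫ x in (2 * a - c)..a, g x := by
      simpa [intervalIntegral.integral_const, smul_eq_mul, mul_comm] using this
    have : a - (2 * a - c) = c - a := by ring
    linarith [this ▸ h']
  -- ∫_{2a-c}^a g ≤ ∫_cl^a g
  have hsplit : (∫ x in cl..(2*a - c), g x) + (∫ x in (2*a - c)..a, g x) = ∫ x in cl..a, g x :=
    intervalIntegral.integral_add_adjacent_intervals (hgi _ _) (hgi _ _)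
  have hnn : 0 ≤ ∫ x in cl..(2*a - c), g x :=
    intervalIntegral.integral_nonneg hcl2 (fun x _ => hg x)
  have hGsplit : (∫ x in cl..a, g x) + (∫ x in a..c, g x) = ∫ x in cl..c, g x :=
    intervalIntegral.integral_add_adjacent_intervals (hgi _ _) (hgi _ _)
  rw [hG, hG]
  linarith
end

section
/- For a truncated normal distribution N(μ, σ²) restricted to [0, ∞), if σ ≥ (5/(2√2))·μ then the virtual cost satisfies φ(c) ≥ (3/2)·c for all c ≥ 0. -/
open MeasureTheory

/-- The Gauss error function. -/
noncomputable def erf (x : ℝ) : ℝ :=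
  (2 / Real.sqrt Real.pi) * ∫ t in (0 : ℝ)..x, Real.exp (-t ^ 2)

lemma erf_nonneg' {x : ℝ} (hx : 0 ≤ x) : 0 ≤ erf x := by
  unfold erf
  apply mul_nonneg (by positivity)
  exact intervalIntegral.integral_nonneg hx (fun t _ => (Real.exp_pos _).le)

lemma erf_ge_lin {x : ℝ} (hx : x ≤ 0) : 2 / Real.sqrt Real.pi * x ≤ erf x := by
  unfold erf
  have hint : IntervalIntegrable (fun t : ℝ => Real.exp (-t ^ 2)) volume x 0 :=
    (Real.continuous_exp.comp (by continuity)).intervalIntegrable x 0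
  have h1 : ∫ t in x..(0:ℝ), Real.exp (-t ^ 2) ≤ ∫ t in x..(0:ℝ), (1:ℝ) := by
    apply intervalIntegral.integral_mono_on hx hint intervalIntegrable_const
    intro t _
    have ht : -t ^ 2 ≤ 0 := by nlinarith [sq_nonneg t]
    exact Real.exp_le_one_iff.mpr ht
  have h2 : ∫ t in x..(0:ℝ), (1:ℝ) = -x := by simp
  have h3 : x ≤ ∫ t in (0:ℝ)..x, Real.exp (-t ^ 2) := by
    rw [intervalIntegral.integral_symm]
    linarith [h1.trans_eq h2]
  exact mul_le_mul_of_nonneg_left h3 (by positivity)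

set_option maxHeartbeats 1000000 in
/-- for a normal distribution `N(μ, σ²)` truncated at `0`, if
`σ ≥ (5/(2√2))·μ` then the virtual cost
`φ(c) = c + (σ√π/√2)(1 + erf((c-μ)/(σ√2)))·exp((c-μ)²/(2σ²))` satisfies
`φ(c) ≥ (3/2)·c` for all `c ≥ 0`. -/
theorem truncated_normal_virtual_cost_lower_bound
    (μ σ : ℝ) (hσ : 0 < σ) (hμ : 0 ≤ μ)
    (h : 5 / (2 * Real.sqrt 2) * μ ≤ σ) :
    ∀ c : ℝ, 0 ≤ c →
      (3 / 2) * c ≤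
        c + σ * Real.sqrt Real.pi / Real.sqrt 2 *
          (1 + erf ((c - μ) / (σ * Real.sqrt 2))) *
          Real.exp ((c - μ) ^ 2 / (2 * σ ^ 2)) := by
  intro c hc
  obtain ⟨s, hs_def⟩ : ∃ s, Real.sqrt 2 = s := ⟨_, rfl⟩
  obtain ⟨p, hp_def⟩ : ∃ p, Real.sqrt Real.pi = p := ⟨_, rfl⟩
  rw [hs_def, hp_def]
  rw [hs_def] at h
  have hs : (0:ℝ) < s := hs_def ▸ Real.sqrt_pos.mpr (by norm_num)
  have hs2 : s ^ 2 = 2 := hs_def ▸ Real.sq_sqrt (by norm_num)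
  have hp0 : (0:ℝ) ≤ p := hp_def ▸ Real.sqrt_nonneg _
  have hp2 : p ^ 2 = Real.pi := hp_def ▸ Real.sq_sqrt Real.pi_pos.le
  have hp : (8:ℝ)/5 ≤ p := by
    nlinarith [Real.pi_gt_d6, sq_nonneg (p - 8/5)]
  have h' : 5 * μ ≤ σ * (2 * s) := by
    rw [div_mul_eq_mul_div, div_le_iff₀ (by positivity)] at h
    linarith
  have hq : 0 ≤ (c - μ) ^ 2 / (2 * σ ^ 2) := by positivity
  have he1 : 1 ≤ Real.exp ((c - μ) ^ 2 / (2 * σ ^ 2)) := Real.one_le_exp hq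
  have hA : (0:ℝ) ≤ σ * p / s := by positivity
  rcases le_total μ c with hcase | hcase
  · -- c ≥ μ
    have hX : 0 ≤ (c - μ) / (σ * s) := by
      apply div_nonneg (by linarith) (by positivity)
    have herf := erf_nonneg' hX
    have he2 : 1 + (c - μ) ^ 2 / (2 * σ ^ 2) ≤ Real.exp ((c - μ) ^ 2 / (2 * σ ^ 2)) := by
      have := Real.add_one_le_exp ((c - μ) ^ 2 / (2 * σ ^ 2))
      linarith
    have hsle : s ≤ 3/2 := by nlinarith [sq_nonneg (s - 3/2)]
    have hb1 : 25 * μ ^ 2 ≤ 8 * σ ^ 2 := by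
      have := mul_le_mul h' h' (by positivity) (by positivity)
      nlinarith [hs2]
    have hstep : 15 * c * σ ≤ 32 * σ ^ 2 + 16 * (c - μ) ^ 2 := by
      nlinarith [sq_nonneg (32*c - 32*μ - 15*σ), hb1, sq_nonneg (5*μ - σ)]
    have hpoly : c * σ ^ 2 * s ≤ σ * p * (2 * σ ^ 2 + (c - μ) ^ 2) := by
      have t1 : c * σ ^ 2 * s ≤ (3/2) * (c * σ ^ 2) := by
        nlinarith [mul_nonneg hc (sq_nonneg σ)]
      have t2 : (8/5) * (σ * (2 * σ ^ 2 + (c - μ) ^ 2)) ≤ σ * p * (2 * σ ^ 2 + (c - μ) ^ 2) := by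
        nlinarith [mul_nonneg hσ.le (add_nonneg (by positivity : (0:ℝ) ≤ 2 * σ ^ 2) (sq_nonneg (c - μ)))]
      have t3 : (3/2) * (c * σ ^ 2) ≤ (8/5) * (σ * (2 * σ ^ 2 + (c - μ) ^ 2)) := by
        nlinarith [mul_le_mul_of_nonneg_left hstep hσ.le]
      linarith
    have key : c / 2 ≤ σ * p / s * (1 + (c - μ) ^ 2 / (2 * σ ^ 2)) := by
      have heq : σ * p / s * (1 + (c - μ) ^ 2 / (2 * σ ^ 2))
          = σ * p * (2 * σ ^ 2 + (c - μ) ^ 2) / (s * (2 * σ ^ 2)) := by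
        field_simp
        try ring
      rw [heq, le_div_iff₀ (by positivity)]
      nlinarith [hpoly]
    have h1 : σ * p / s * (1 + (c - μ) ^ 2 / (2 * σ ^ 2))
        ≤ σ * p / s * Real.exp ((c - μ) ^ 2 / (2 * σ ^ 2)) :=
      mul_le_mul_of_nonneg_left he2 hA
    have h2 : σ * p / s * Real.exp ((c - μ) ^ 2 / (2 * σ ^ 2))
        ≤ σ * p / s * (1 + erf ((c - μ) / (σ * s))) *
          Real.exp ((c - μ) ^ 2 / (2 * σ ^ 2)) := by
      have h0 : σ * p / s ≤ σ * p / s * (1 + erf ((c - μ) / (σ * s))) := by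
        nlinarith [mul_nonneg hA herf]
      exact mul_le_mul_of_nonneg_right h0 (Real.exp_pos _).le
    linarith
  · -- c ≤ μ
    have hX : (c - μ) / (σ * s) ≤ 0 :=
      div_nonpos_of_nonpos_of_nonneg (by linarith) (by positivity)
    have herf := hp_def ▸ erf_ge_lin hX
    have hXb : -2/5 ≤ (c - μ) / (σ * s) := by
      rw [le_div_iff₀ (by positivity)]
      nlinarith [h', mul_pos hσ hs]
    have hlin : -(1/2 : ℝ) ≤ 2 / p * ((c - μ) / (σ * s)) := by
      have hb : 2 / p * (-2/5 : ℝ) ≤ 2 / p * ((c - μ) / (σ * s)) :=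
        mul_le_mul_of_nonneg_left hXb (by positivity)
      have h45 : (4:ℝ)/(5*p) ≤ 1/2 := by
        rw [div_le_iff₀ (by positivity)]; linarith
      have heqq : 2/p * (-2/5 : ℝ) = -(4/(5*p)) := by ring
      linarith
    have hbase : 1 + 2 / p * ((c - μ) / (σ * s)) ≤ 1 + erf ((c - μ) / (σ * s)) := by
      linarith
    have hnn : 0 ≤ 1 + 2 / p * ((c - μ) / (σ * s)) := by linarith
    have hmul : σ * p / s * (1 + 2 / p * ((c - μ) / (σ * s)))
        ≤ σ * p / s * (1 + erf ((c - μ) / (σ * s))) *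
          Real.exp ((c - μ) ^ 2 / (2 * σ ^ 2)) := by
      have step1 : σ * p / s * (1 + 2 / p * ((c - μ) / (σ * s)))
          ≤ σ * p / s * (1 + erf ((c - μ) / (σ * s))) :=
        mul_le_mul_of_nonneg_left hbase hA
      have hnn2 : 0 ≤ σ * p / s * (1 + erf ((c - μ) / (σ * s))) :=
        le_trans (mul_nonneg hA hnn) step1
      calc σ * p / s * (1 + 2 / p * ((c - μ) / (σ * s)))
          ≤ σ * p / s * (1 + erf ((c - μ) / (σ * s))) := step1
        _ ≤ _ := le_mul_of_one_le_right hnn2 he1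
    have hBval : σ * p / s * (1 + 2 / p * ((c - μ) / (σ * s))) = σ * p / s + (c - μ) := by
      have hp' : (0:ℝ) < p := by linarith
      rw [mul_add, mul_one]
      congr 1
      field_simp
      linear_combination (μ - c) * hs2
    have hfin : c / 2 ≤ σ * p / s + (c - μ) := by
      have hms : μ * s ≤ σ * p := by
        nlinarith [mul_le_mul_of_nonneg_right h' hs.le, hs2, mul_nonneg hσ.le hp0]
      have : μ ≤ σ * p / s := by rw [le_div_iff₀ hs]; linarith
      linarith
    rw [hBval] at hmul
    linarith
end

section
/- In the parameterized instance with actions i = 0,...,n, efforts γ₀ = 0, γ_i = δ^{-i} − (i+1) + δi, rewards r_i = δ^{-i} (r₀ = 0), and deterministic outcomes (action i yields reward r_i with probability 1), for an agent of known type c = 1: (a) the minimal linear-contract parameter that incentivizes action i > 1 is α_i = 1 − δ^i, and for action 1 it is α₁ = 1 − 2δ + δ², so any linear contract yields revenue at most 2; (b) the contract paying t_n = γ_n for outcome n (and 0 otherwise) extracts revenue r_n − γ_n = n + 1 − δn. Hence the gap between optimal and best linear contract revenue is at least (n + 1 − δn)/2 = Ω(n). -/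
section aux
variable {δ : ℝ}

lemma aux_one_sub_pow (hδ0 : 0 < δ) (hδ1 : δ < 1) (m : ℕ) :
    1 - δ ^ m ≤ (m : ℝ) * (1 - δ) := by
  induction m with
  | zero => simp
  | succ m ih =>
      have hp : (0:ℝ) ≤ δ ^ m := by positivity
      have hle : δ ^ m ≤ 1 := pow_le_one₀ hδ0.le hδ1.le
      have hm : (0:ℝ) ≤ (m:ℝ) := Nat.cast_nonneg m
      rw [pow_succ]
      push_cast
      nlinarith [mul_le_mul_of_nonneg_left ih hδ0.le]

lemma aux_bernoulli (hδ0 : 0 < δ) (hδ1 : δ < 1) (m : ℕ) :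
    1 + (m : ℝ) * (1 - δ) ≤ (1 / δ) ^ m := by
  have h1 : (1:ℝ) + (m:ℝ) * (1/δ - 1) ≤ (1/δ) ^ m := by
    have := one_add_mul_le_pow (a := 1/δ - 1) (by
      have : (0:ℝ) < 1/δ := by positivity
      linarith) m
    simpa using this
  have h2 : (1:ℝ) - δ ≤ 1/δ - 1 := by
    rw [le_sub_iff_add_le, le_div_iff₀ hδ0]
    nlinarith [sq_nonneg (1-δ)]
  nlinarith [Nat.cast_nonneg (α := ℝ) m]

lemma aux_key (hδ0 : 0 < δ) (hδ1 : δ < 1) (i j : ℕ) :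
    (1 - δ) * ((j : ℝ) - (i : ℝ)) ≤ (1 / δ) ^ j * δ ^ i - 1 := by
  have hcancel : ∀ k : ℕ, (1/δ) ^ k * δ ^ k = 1 := by
    intro k
    rw [← mul_pow, one_div_mul_cancel (ne_of_gt hδ0), one_pow]
  rcases le_total i j with h | h
  · obtain ⟨m, rfl⟩ := Nat.exists_eq_add_of_le h
    have he : (1/δ) ^ (i + m) * δ ^ i = (1/δ) ^ m := by
      rw [pow_add]
      calc (1/δ) ^ i * (1/δ) ^ m * δ ^ i
          = (1/δ) ^ i * δ ^ i * (1/δ) ^ m := by ring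
        _ = (1/δ) ^ m := by rw [hcancel]; ring
    rw [he]
    have := aux_bernoulli hδ0 hδ1 m
    push_cast
    nlinarith
  · obtain ⟨m, rfl⟩ := Nat.exists_eq_add_of_le h
    have he : (1/δ) ^ j * δ ^ (j + m) = δ ^ m := by
      rw [pow_add]
      calc (1/δ) ^ j * (δ ^ j * δ ^ m)
          = (1/δ) ^ j * δ ^ j * δ ^ m := by ring
        _ = δ ^ m := by rw [hcancel]; ring
    rw [he]
    have := aux_one_sub_pow hδ0 hδ1 m
    push_cast
    nlinarith

end aux

/-- in the parameterized instance with `γ_0 = 0`, `γ_i = δ^{-i} - (i+1) + δi`,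
`r_0 = 0`, `r_i = δ^{-i}` and deterministic outcomes, for an agent of known type `c = 1`:
(a) the minimal linear parameter incentivizing action `i > 1` is `1 - δ^i`, and for
action `1` it is `1 - 2δ + δ²`, so any linear contract yields revenue at most `2`;
(b) the contract paying `γ_n` on outcome `n` incentivizes action `n` and extracts revenue
`r_n - γ_n = n + 1 - δn`; hence the ratio of optimal to linear revenue is at least
`(n + 1 - δn)/2 = Ω(n)`. -/
theorem point_mass_linear_gap
    (n : ℕ) (hn : 1 ≤ n) (δ : ℝ) (hδ0 : 0 < δ) (hδ1 : δ < 1)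
    (γ r : ℕ → ℝ) (hγ0 : γ 0 = 0) (hr0 : r 0 = 0)
    (hγ : ∀ i : ℕ, 1 ≤ i → γ i = (1 / δ) ^ i - ((i : ℝ) + 1) + δ * i)
    (hr : ∀ i : ℕ, 1 ≤ i → r i = (1 / δ) ^ i) :
    -- (a) minimal linear parameters incentivizing each action for type c = 1
    (∀ i : ℕ, 2 ≤ i → i ≤ n →
        IsLeast {α : ℝ | ∀ j ≤ n, α * r j - γ j ≤ α * r i - γ i} (1 - δ ^ i)) ∧
    IsLeast {α : ℝ | ∀ j ≤ n, α * r j - γ j ≤ α * r 1 - γ 1} (1 - 2 * δ + δ ^ 2) ∧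
    -- any linear contract yields revenue at most 2
    (∀ (α : ℝ) (i : ℕ), i ≤ n → 0 ≤ α →
        (∀ j ≤ n, α * r j - γ j ≤ α * r i - γ i) → (1 - α) * r i ≤ 2) ∧
    -- (b) paying t_n = γ_n on outcome n incentivizes action n ...
    (∀ j ≤ n, (if j = n then γ n else 0) - γ j ≤ γ n - γ n) ∧
    -- ... and extracts revenue r_n - γ_n = n + 1 - δ n
    r n - γ n = (n : ℝ) + 1 - δ * n ∧
    -- hence the multiplicative gap is at least (n + 1 - δ n)/2
    (∀ (α : ℝ) (i : ℕ), i ≤ n → 0 ≤ α →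
        (∀ j ≤ n, α * r j - γ j ≤ α * r i - γ i) →
        ((n : ℝ) + 1 - δ * n) / 2 * ((1 - α) * r i) ≤ r n - γ n) := by
  have hδ' : δ ≠ 0 := ne_of_gt hδ0
  have hcancel : ∀ k : ℕ, (1/δ) ^ k * δ ^ k = 1 := by
    intro k
    rw [← mul_pow, one_div_mul_cancel hδ', one_pow]
  have hρpos : ∀ k : ℕ, (0:ℝ) < (1/δ) ^ k := by intro k; positivity
  have hδpow : ∀ k : ℕ, (0:ℝ) < δ ^ k := by intro k; positivity
  -- lower bound for i ≥ 2
  have lb2 : ∀ (α : ℝ) (k : ℕ), 1 ≤ k → k + 1 ≤ n →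
      (∀ j ≤ n, α * r j - γ j ≤ α * r (k+1) - γ (k+1)) → 1 - δ ^ (k+1) ≤ α := by
    intro α k hk hkn hIC
    have h := hIC k (by omega)
    rw [hr k hk, hr (k+1) (by omega), hγ k hk, hγ (k+1) (by omega)] at h
    push_cast at h
    have e1 : (1/δ) ^ (k+1) - (1/δ) ^ k = (1 - δ) * (1/δ) ^ (k+1) := by
      rw [pow_succ]
      field_simp
    have e2 : α * (1/δ)^(k+1) - α * (1/δ)^k = α * ((1-δ) * (1/δ)^(k+1)) := by
      rw [← mul_sub, e1]
    have h2 : ((1/δ) ^ (k+1) - 1) * (1 - δ) ≤ α * (1/δ) ^ (k+1) * (1 - δ) := by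
      nlinarith [h, e1, e2]
    have h3 : (1/δ) ^ (k+1) - 1 ≤ α * (1/δ) ^ (k+1) :=
      le_of_mul_le_mul_right h2 (by linarith)
    have h4 := hcancel (k+1)
    have e3 : α * ((1/δ)^(k+1) * δ^(k+1)) = α := by rw [h4]; ring
    have hm := mul_le_mul_of_nonneg_right h3 (hδpow (k+1)).le
    nlinarith [hm, e3, h4]
  -- lower bound for i = 1
  have lb1 : ∀ α : ℝ, (∀ j ≤ n, α * r j - γ j ≤ α * r 1 - γ 1) →
      1 - 2 * δ + δ ^ 2 ≤ α := by
    intro α hIC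
    have h := hIC 0 (by omega)
    rw [hr0, hγ0, hr 1 le_rfl, hγ 1 le_rfl] at h
    push_cast at h
    rw [pow_one] at h
    have hm := mul_le_mul_of_nonneg_left h hδ0.le
    have e2 : δ * (α * (1/δ)) = α := by field_simp
    have e : δ * (1/δ) = 1 := mul_one_div_cancel hδ'
    nlinarith [hm, e2, e]
  -- membership for i ≥ 1 with α = 1 - δ^i
  have mem2 : ∀ i : ℕ, 1 ≤ i → ∀ j ≤ n,
      (1 - δ ^ i) * r j - γ j ≤ (1 - δ ^ i) * r i - γ i := by
    intro i hi j _
    rw [hr i hi, hγ i hi]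
    rcases Nat.eq_zero_or_pos j with rfl | hj
    · rw [hr0, hγ0]
      have h1 := hcancel i
      have heq : (1 - δ ^ i) * (1/δ) ^ i - ((1/δ) ^ i - ((i:ℝ) + 1) + δ * i)
          = (1 - δ) * i := by linear_combination -h1
      rw [heq]
      have : (0:ℝ) ≤ (i:ℝ) := Nat.cast_nonneg i
      nlinarith
    · rw [hr j hj, hγ j hj]
      have hk := aux_key hδ0 hδ1 i j
      have h1 := hcancel i
      linarith
  -- membership for i = 1 with α = 1 - 2δ + δ²
  have mem1 : ∀ j ≤ n,
      (1 - 2*δ + δ^2) * r j - γ j ≤ (1 - 2*δ + δ^2) * r 1 - γ 1 := by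
    intro j hjn
    have hRHS : (1 - 2*δ + δ^2) * r 1 - γ 1 = 0 := by
      rw [hr 1 le_rfl, hγ 1 le_rfl]
      push_cast
      field_simp
      ring
    rw [hRHS]
    rcases j with _ | _ | m
    · rw [hr0, hγ0]; simp
    · rw [← hRHS]
    · rw [hr _ (by omega), hγ _ (by omega)]
      have hb := aux_bernoulli hδ0 hδ1 (m+1)
      have he : (1/δ) ^ (m+1+1) = (1/δ) * (1/δ) ^ (m+1) := by rw [pow_succ]; ring
      have hq : (2*δ - δ^2) * (1/δ) ^ (m+1+1) = (2 - δ) * (1/δ) ^ (m+1) := by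
        rw [he]
        field_simp
      have h5 : (2-δ) * (1 + ((m:ℝ)+1) * (1-δ)) ≤ (2-δ) * (1/δ) ^ (m+1) :=
        mul_le_mul_of_nonneg_left (by push_cast at hb ⊢; linarith) (by linarith)
      have hm : (0:ℝ) ≤ (m:ℝ) := Nat.cast_nonneg m
      push_cast
      nlinarith [h5, hq, sq_nonneg (1-δ), mul_nonneg hm (sq_nonneg (1-δ))]
  -- revenue ≤ 2
  have rev2 : ∀ (α : ℝ) (i : ℕ), i ≤ n → 0 ≤ α →
      (∀ j ≤ n, α * r j - γ j ≤ α * r i - γ i) → (1 - α) * r i ≤ 2 := by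
    intro α i hin hα hIC
    rcases i with _ | _ | k
    · rw [hr0]; norm_num
    · have hb := lb1 α hIC
      rw [hr 1 le_rfl, pow_one]
      have e : δ * (1/δ) = 1 := mul_one_div_cancel hδ'
      nlinarith [hρpos 1, e]
    · have hb := lb2 α (k+1) (by omega) (by omega) hIC
      rw [hr _ (by omega)]
      have h1 := hcancel (k+1+1)
      nlinarith [hρpos (k+1+1), hb, h1]
  refine ⟨?_, ⟨mem1, lb1⟩, rev2, ?_, ?_, ?_⟩
  · intro i h2 hin
    obtain ⟨k, rfl⟩ : ∃ k, i = k + 1 := ⟨i - 1, by omega⟩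
    exact ⟨mem2 (k+1) (by omega), fun α hα => lb2 α k (by omega) (by omega) hα⟩
  · intro j hj
    simp only [sub_self]
    split_ifs with h
    · subst h; simp
    · rcases Nat.eq_zero_or_pos j with rfl | hj1
      · rw [hγ0]; norm_num
      · rw [hγ j hj1]
        have hb := aux_bernoulli hδ0 hδ1 j
        have : (0:ℝ) ≤ (j:ℝ) := Nat.cast_nonneg j
        nlinarith
  · rw [hr n hn, hγ n hn]; ring
  · intro α i hin hα hIC
    have h2 := rev2 α i hin hα hIC
    have hrn : r n - γ n = (n:ℝ) + 1 - δ * n := by rw [hr n hn, hγ n hn]; ring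
    rw [hrn]
    have hnn : (0:ℝ) ≤ (n:ℝ) := Nat.cast_nonneg n
    have hnpos : (0:ℝ) ≤ (n:ℝ) + 1 - δ * n := by nlinarith
    nlinarith
end

section
/- (Smoothed analysis) For any ε ∈ (0,1), let G be the mixture distribution that with probability 1−ε is a point mass at 1 and with probability ε is uniform on [0,2]. Then G satisfies G(c/2) ≥ (ε/(2(2−ε)))·G(c) for all c > 0, i.e., G is (1/2, ε/(2(2−ε)), 0)-slowly-increasing; consequently the best linear contract achieves a 4(2−ε)/ε-approximation to the optimal welfare for any principal-agent instance with type distribution G. -/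
open MeasureTheory

/-- smoothed analysis: let `G` be the mixture that with probability
`1-ε` is a point mass at `1` and with probability `ε` is uniform on `[0,2]`. Then
`G(c/2) ≥ (ε/(2(2-ε)))·G(c)` for all `c > 0`, i.e. `G` is
`(1/2, ε/(2(2-ε)), 0)`-slowly-increasing; consequently, for any principal-agent
instance with type distribution `G`, the best linear contract achieves a
`4(2-ε)/ε`-approximation to the optimal welfare. -/
theorem smoothed_point_mass_linear_approx
    (ε : ℝ) (hε0 : 0 < ε) (hε1 : ε < 1)
    (G : ℝ → ℝ)
    (hG : ∀ c : ℝ, 0 ≤ c →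
      G c = (1 - ε) * (if 1 ≤ c then 1 else 0) + ε * min (c / 2) 1) :
    (∀ c : ℝ, 0 < c → ε / (2 * (2 - ε)) * G c ≤ G (c / 2)) ∧
      ∀ (n : ℕ) (γ R : Fin (n + 1) → ℝ),
        γ 0 = 0 → StrictMono γ → R 0 = 0 → StrictMono R →
        ∀ μ : Measure ℝ, IsProbabilityMeasure μ →
          μ (Set.Iio 0) = 0 →
          (∀ c : ℝ, 0 ≤ c → (μ (Set.Iic c)).toReal = G c) →
          ∀ istar : ℝ → ℝ → Fin (n + 1),
            (∀ t c j, t * R j - γ j * c ≤ t * R (istar t c) - γ (istar t c) * c) →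
            (∀ t, Measurable fun c => (istar t c : ℕ)) →
            ∃ α : ℝ, 0 < α ∧ α < 1 ∧
              (∫ c, (R (istar 1 c) - γ (istar 1 c) * c) ∂μ) ≤
                4 * (2 - ε) / ε * ∫ c, (1 - α) * R (istar α c) ∂μ := by
  have h2ε : (0:ℝ) < 2 - ε := by linarith
  constructor
  · -- slowly increasing property
    intro c hc
    rw [hG c hc.le, hG (c/2) (by linarith)]
    rcases lt_or_ge c 1 with h1 | h1
    · rw [if_neg (by linarith), if_neg (by linarith),
        min_eq_left (by linarith : c/2 ≤ 1), min_eq_left (by linarith : c/2/2 ≤ 1)]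
      rw [div_mul_eq_mul_div, div_le_iff₀ (by linarith)]
      nlinarith [mul_nonneg (mul_nonneg hε0.le hε0.le) hc.le,
        mul_nonneg (mul_nonneg hε0.le hc.le) h2ε.le]
    · rcases lt_or_ge c 2 with h2 | h2
      · rw [if_pos h1, if_neg (by linarith), min_eq_left (by linarith),
          min_eq_left (by linarith)]
        rw [div_mul_eq_mul_div, div_le_iff₀ (by linarith)]
        nlinarith [mul_nonneg (mul_nonneg hε0.le (by linarith : (0:ℝ) ≤ c - 1))
          (by linarith : (0:ℝ) ≤ 1 - ε)]
      · rw [if_pos h1, if_pos (by linarith), min_eq_right (by linarith : (1:ℝ) ≤ c/2)]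
        have hm : (1:ℝ)/2 ≤ min (c/2/2) 1 := le_min (by linarith) (by norm_num)
        rw [div_mul_eq_mul_div, div_le_iff₀ (by linarith)]
        nlinarith [mul_le_mul_of_nonneg_left hm hε0.le]
  · -- approximation guarantee for the linear contract α = 1/2
    intro n γ R hγ0 hγm hR0 hRm μ hprob hneg hcdf istar hopt hmes
    refine ⟨1/2, by norm_num, by norm_num, ?_⟩
    set W : ℝ → ℝ := fun c => R (istar 1 c) - γ (istar 1 c) * c with hWdef
    set S : ℝ → ℝ := fun c => (1 - 1/2 : ℝ) * R (istar (1/2) c) with hSdef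
    show (∫ c, W c ∂μ) ≤ 4 * (2 - ε) / ε * ∫ c, S c ∂μ
    clear_value W S
    have hγnn : ∀ j, 0 ≤ γ j := fun j => by
      have := hγm.monotone (Fin.zero_le j); rwa [hγ0] at this
    have hRnn : ∀ j, 0 ≤ R j := fun j => by
      have := hRm.monotone (Fin.zero_le j); rwa [hR0] at this
    have hWnn : ∀ c, 0 ≤ W c := by
      intro c
      have h := hopt 1 c 0
      rw [hR0, hγ0] at h
      simp only [hWdef, one_mul] at h ⊢
      linarith
    have hWanti : Antitone W := by
      intro c d hcd
      have h1 := hopt 1 c (istar 1 d)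
      have h2 : γ (istar 1 d) * c ≤ γ (istar 1 d) * d :=
        mul_le_mul_of_nonneg_left hcd (hγnn _)
      simp only [hWdef, one_mul] at h1 ⊢
      linarith
    have hSnn : ∀ c, 0 ≤ S c := fun c => by
      rw [hSdef]
      exact mul_nonneg (by norm_num) (hRnn _)
    have hSW : ∀ c, 0 ≤ c → W (2*c) ≤ 2 * S c := by
      intro c hc
      have h1 := hopt (1/2) c (istar 1 (2*c))
      have h2 : 0 ≤ γ (istar (1/2) c) * c := mul_nonneg (hγnn _) hc
      simp only [hWdef, hSdef, one_mul]
      linarith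
    -- measurability of compositions
    have hcomp : ∀ (t : ℝ) (F : Fin (n+1) → ℝ), Measurable fun c => F (istar t c) := by
      intro t F
      have heq : (fun c => F (istar t c)) =
          (fun k : ℕ => if hk : k < n+1 then F ⟨k, hk⟩ else 0) ∘
            (fun c => ((istar t c : ℕ))) := by
        funext c
        simp [Function.comp, (istar t c).isLt]
      rw [heq]
      exact measurable_from_nat.comp (hmes t)
    have hWmes : Measurable W := by
      have := ((hcomp 1 R).sub ((hcomp 1 γ).mul measurable_id))
      rw [hWdef]; exact this
    have hSmes : Measurable S := by
      have := (hcomp (1/2) R).const_mul (1 - 1/2 : ℝ)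
      simpa [hSdef] using this
    -- identify μ with the explicit mixture measure ν
    set ν : Measure ℝ := ENNReal.ofReal (1-ε) • Measure.dirac 1 +
        ENNReal.ofReal (ε/2) • volume.restrict (Set.Icc 0 2) with hνdef
    have hμν : μ = ν := by
      refine Measure.ext_of_Iic μ ν (fun a => ?_)
      rcases lt_or_ge a 0 with ha | ha
      · have hsub : Set.Iic a ⊆ Set.Iio 0 := fun x hx => lt_of_le_of_lt hx ha
        have hμ0 : μ (Set.Iic a) = 0 :=
          le_antisymm (le_trans (measure_mono hsub) hneg.le) zero_le'
        have hIcc : Set.Iic a ∩ Set.Icc (0:ℝ) 2 = ∅ := by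
          ext x; simp only [Set.mem_inter_iff, Set.mem_Iic, Set.mem_Icc, Set.mem_empty_iff_false,
            iff_false, not_and]
          intro hx hx0; linarith
        rw [hμ0, hνdef]
        simp [Measure.restrict_apply measurableSet_Iic, hIcc,
          Measure.dirac_apply' _ measurableSet_Iic, Set.indicator_apply, ha.not_ge,
          (by linarith : ¬ (1:ℝ) ≤ a)]
      · have hfin : μ (Set.Iic a) ≠ ⊤ := measure_ne_top μ _
        have hμa : μ (Set.Iic a) = ENNReal.ofReal (G a) := by
          rw [← hcdf a ha, ENNReal.ofReal_toReal hfin]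
        have hd : Measure.dirac (1:ℝ) (Set.Iic a) = if (1:ℝ) ≤ a then 1 else 0 := by
          rcases le_or_gt 1 a with h | h
          · rw [if_pos h]; exact Measure.dirac_apply_of_mem h
          · rw [if_neg h.not_ge, Measure.dirac_apply' _ measurableSet_Iic,
              Set.indicator_apply]
            simp [h.not_ge]
        have hIcc : Set.Iic a ∩ Set.Icc (0:ℝ) 2 = Set.Icc 0 (min a 2) := by
          ext x
          simp only [Set.mem_inter_iff, Set.mem_Iic, Set.mem_Icc, le_min_iff]
          tauto
        have hr : (volume.restrict (Set.Icc (0:ℝ) 2)) (Set.Iic a) =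
            ENNReal.ofReal (min a 2) := by
          rw [Measure.restrict_apply measurableSet_Iic, hIcc, Real.volume_Icc, sub_zero]
        have hmin0 : (0:ℝ) ≤ min a 2 := le_min ha (by norm_num)
        have hmin : ε * min (a/2) 1 = (ε/2) * min a 2 := by
          rcases le_total a 2 with h' | h'
          · rw [min_eq_left (by linarith), min_eq_left h']; ring
          · rw [min_eq_right (by linarith), min_eq_right h']; ring
        rw [hμa, hG a ha, hmin, hνdef]
        simp only [Measure.coe_add, Measure.coe_smul, Pi.add_apply, Pi.smul_apply,
          smul_eq_mul, hd, hr]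
        rcases le_or_gt 1 a with h | h
        · rw [if_pos h, if_pos h, mul_one, mul_one,
            ENNReal.ofReal_add (by linarith) (mul_nonneg (by linarith) hmin0),
            ENNReal.ofReal_mul (by linarith)]
        · rw [if_neg h.not_ge, if_neg h.not_ge, mul_zero, mul_zero, zero_add, zero_add,
            ENNReal.ofReal_mul (by linarith)]
    -- integral decomposition for bounded measurable functions
    have key : ∀ (f : ℝ → ℝ) (M : ℝ), Measurable f → (∀ x ∈ Set.Icc (0:ℝ) 2, |f x| ≤ M) →
        ∫ c, f c ∂ν = (1-ε) * f 1 + (ε/2) * ∫ x in Set.Icc (0:ℝ) 2, f x := by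
      intro f M hf hM
      have hd : Integrable f (Measure.dirac (1:ℝ)) := by
        refine (integrable_const (f 1)).congr ?_
        rw [Filter.EventuallyEq, ae_dirac_eq]
        simp
      have hr : IntegrableOn f (Set.Icc (0:ℝ) 2) volume := by
        refine Measure.integrableOn_of_bounded (M := M) ?_ hf.aestronglyMeasurable ?_
        · rw [Real.volume_Icc]; exact ENNReal.ofReal_ne_top
        · filter_upwards [ae_restrict_mem measurableSet_Icc] with x hx
          simpa [Real.norm_eq_abs] using hM x hx
      rw [hνdef, integral_add_measure (hd.smul_measure ENNReal.ofReal_ne_top)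
        (hr.smul_measure ENNReal.ofReal_ne_top), integral_smul_measure,
        integral_smul_measure, integral_dirac, ENNReal.toReal_ofReal (by linarith),
        ENNReal.toReal_ofReal (by linarith), smul_eq_mul, smul_eq_mul]
    -- bounds for W and S on [0,2]
    set A : ℝ := ∑ j : Fin (n+1), |R j| with hAdef
    set B : ℝ := ∑ j : Fin (n+1), |γ j| with hBdef
    have hRA : ∀ j, |R j| ≤ A :=
      fun j => Finset.single_le_sum (fun i _ => abs_nonneg (R i)) (Finset.mem_univ j)
    have hγB : ∀ j, |γ j| ≤ B :=
      fun j => Finset.single_le_sum (fun i _ => abs_nonneg (γ i)) (Finset.mem_univ j)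
    have hWbd : ∀ x ∈ Set.Icc (0:ℝ) 2, |W x| ≤ A + 2*B := by
      intro x hx
      simp only [Set.mem_Icc] at hx
      rw [hWdef]
      have h1 : |R (istar 1 x)| ≤ A := hRA _
      have h2 : |γ (istar 1 x) * x| ≤ B * 2 := by
        rw [abs_mul]
        exact mul_le_mul (hγB _) (by rw [abs_of_nonneg hx.1]; exact hx.2) (abs_nonneg x)
          (le_trans (abs_nonneg (γ 0)) (hγB 0))
      calc |R (istar 1 x) - γ (istar 1 x) * x| ≤ |R (istar 1 x)| + |γ (istar 1 x) * x| :=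
            abs_sub _ _
        _ ≤ A + 2*B := by linarith
    have hSbd : ∀ x ∈ Set.Icc (0:ℝ) 2, |S x| ≤ A := by
      intro x _
      simp only [hSdef]
      rw [abs_mul]
      have he : |(1 - 1/2 : ℝ)| = 1/2 := by
        rw [abs_of_nonneg (by norm_num : (0:ℝ) ≤ 1 - 1/2)]
        norm_num
      rw [he]
      have h1 : |R (istar (1/2) x)| ≤ A := hRA _
      have h2 : (0:ℝ) ≤ |R (istar (1/2) x)| := abs_nonneg _
      linarith
    -- rewrite the goal integrals
    have hWint : ∫ c, W c ∂μ = (1-ε) * W 1 + (ε/2) * ∫ x in Set.Icc (0:ℝ) 2, W x := by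
      rw [hμν]; exact key W (A + 2*B) hWmes hWbd
    have hSint : ∫ c, S c ∂μ = (1-ε) * S 1 + (ε/2) * ∫ x in Set.Icc (0:ℝ) 2, S x := by
      rw [hμν]; exact key S A hSmes hSbd
    have hIccInt : ∀ f : ℝ → ℝ, ∫ x in Set.Icc (0:ℝ) 2, f x = ∫ x in (0:ℝ)..2, f x := by
      intro f
      rw [intervalIntegral.integral_of_le (by norm_num : (0:ℝ) ≤ 2),
        integral_Icc_eq_integral_Ioc]
    -- interval-integral estimates
    have hWii : ∀ a b : ℝ, IntervalIntegrable W volume a b := fun a b =>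
      hWanti.intervalIntegrable
    have hW2anti : Antitone (fun x => W (2*x)) := fun c d h => hWanti (by linarith)
    have hSii : IntervalIntegrable S volume 0 2 := by
      rw [intervalIntegrable_iff_integrableOn_Ioc_of_le (by norm_num : (0:ℝ) ≤ 2)]
      refine Measure.integrableOn_of_bounded (M := A) ?_ hSmes.aestronglyMeasurable ?_
      · rw [Real.volume_Ioc]; exact ENNReal.ofReal_ne_top
      · filter_upwards [ae_restrict_mem measurableSet_Ioc] with x hx
        simpa [Real.norm_eq_abs] using hSbd x (Set.Ioc_subset_Icc_self hx)
    have step1 : (1/2) * ∫ x in (0:ℝ)..2, W (2*x) ≤ ∫ x in (0:ℝ)..2, S x := by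
      rw [← intervalIntegral.integral_const_mul]
      refine intervalIntegral.integral_mono_on (by norm_num)
        ((hW2anti.intervalIntegrable).const_mul _) hSii ?_
      intro x hx
      have := hSW x hx.1
      linarith
    have step2 : ∫ x in (0:ℝ)..2, W (2*x) = (1/2) * ∫ x in (0:ℝ)..4, W x := by
      have := intervalIntegral.integral_comp_mul_left (a := (0:ℝ)) (b := 2) (f := W)
        (c := 2) two_ne_zero
      rw [this]
      norm_num
    have step3 : ∫ x in (0:ℝ)..2, W x ≤ ∫ x in (0:ℝ)..4, W x := by
      have hadd : (∫ x in (0:ℝ)..2, W x) + ∫ x in (2:ℝ)..4, W x = ∫ x in (0:ℝ)..4, W x :=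
        intervalIntegral.integral_add_adjacent_intervals (hWii 0 2) (hWii 2 4)
      have hnn : 0 ≤ ∫ x in (2:ℝ)..4, W x :=
        intervalIntegral.integral_nonneg (by norm_num) (fun u _ => hWnn u)
      linarith
    have step4 : W 1 ≤ ∫ x in (0:ℝ)..2, W x := by
      have hadd : (∫ x in (0:ℝ)..1, W x) + ∫ x in (1:ℝ)..2, W x = ∫ x in (0:ℝ)..2, W x :=
        intervalIntegral.integral_add_adjacent_intervals (hWii 0 1) (hWii 1 2)
      have h1 : (∫ x in (0:ℝ)..1, (W 1 : ℝ)) ≤ ∫ x in (0:ℝ)..1, W x := by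
        refine intervalIntegral.integral_mono_on (by norm_num) intervalIntegrable_const
          (hWii 0 1) ?_
        intro x hx
        exact hWanti hx.2
      rw [intervalIntegral.integral_const] at h1
      simp only [sub_zero, one_smul] at h1
      have hnn : 0 ≤ ∫ x in (1:ℝ)..2, W x :=
        intervalIntegral.integral_nonneg (by norm_num) (fun u _ => hWnn u)
      linarith
    have step5 : 0 ≤ ∫ x in (0:ℝ)..2, W x :=
      intervalIntegral.integral_nonneg (by norm_num) (fun u _ => hWnn u)
    -- assemble
    rw [hWint, hSint, hIccInt W, hIccInt S]
    set IW2 : ℝ := ∫ x in (0:ℝ)..2, W x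
    set IW4 : ℝ := ∫ x in (0:ℝ)..4, W x
    set IS : ℝ := ∫ x in (0:ℝ)..2, S x
    clear_value IW2 IW4 IS
    have hIS : IW4 / 4 ≤ IS := by
      have := step1
      rw [step2] at this
      linarith
    have e1 : 4*(2-ε)/ε * ((1-ε) * S 1 + ε/2 * IS) =
        4*(2-ε)/ε * ((1-ε) * S 1) + 2*(2-ε) * IS := by
      field_simp
      ring
    rw [e1]
    have t0 : 0 ≤ 4*(2-ε)/ε * ((1-ε) * S 1) := by
      apply mul_nonneg
      · positivity
      · exact mul_nonneg (by linarith) (hSnn 1)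
    have t1 : (1-ε) * W 1 ≤ (1-ε) * IW2 :=
      mul_le_mul_of_nonneg_left step4 (by linarith)
    have t2 : (2-ε) * IW2 ≤ (2-ε) * IW4 :=
      mul_le_mul_of_nonneg_left step3 (by linarith)
    have t3 : 2*(2-ε) * (IW4/4) ≤ 2*(2-ε) * IS :=
      mul_le_mul_of_nonneg_left hIS (by linarith)
    nlinarith [t0, t1, t2, t3]
end

section
/- (Likelihood-ratio payment concentration) Suppose outcome j_i maximizes the likelihood ratio F_{i,j}/F_{i',j} over outcomes j, for every other action i'. Given any payment vector t ≥ 0 intended for action i, define t̂ by t̂_{j_i} = (1/F_{i,j_i})·Σ_j t_j F_{i,j} and t̂_j = 0 for j ≠ j_i. Then the expected payment to an agent choosing action i is unchanged (Σ_j t̂_j F_{i,j} = Σ_j t_j F_{i,j}), while for every other action i', the expected payment weakly decreases (Σ_j t̂_j F_{i',j} ≤ Σ_j t_j F_{i',j}). Consequently, if action i was incentive compatible under t, it remains so under t̂. -/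
/-- likelihood-ratio payment concentration: if outcome `j_i` maximizes
the likelihood ratio of action `i` against every other action, then concentrating the
payments `t` on outcome `j_i` (preserving the expected payment for action `i`) leaves
the expected payment for action `i` unchanged, weakly decreases it for every other
action, and preserves incentive compatibility of action `i`. -/
theorem likelihood_ratio_payment_concentration
    (na m : ℕ) (F : Fin (na + 1) → Fin (m + 1) → ℝ)
    (hF : ∀ i j, 0 ≤ F i j)
    (i : Fin (na + 1)) (ji : Fin (m + 1)) (hji : 0 < F i ji)
    -- likelihood-ratio-maximizing property of outcome j_i
    (hLR : ∀ i', i' ≠ i → ∀ j, F i' ji * F i j ≤ F i ji * F i' j)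
    (t : Fin (m + 1) → ℝ) (ht : ∀ j, 0 ≤ t j)
    (that : Fin (m + 1) → ℝ)
    (hthat : ∀ j, that j = if j = ji then (∑ k, t k * F i k) / F i ji else 0) :
    (∑ j, that j * F i j = ∑ j, t j * F i j) ∧
    (∀ i', i' ≠ i → ∑ j, that j * F i' j ≤ ∑ j, t j * F i' j) ∧
    (∀ (γ : Fin (na + 1) → ℝ) (c : ℝ),
      (∀ i', (∑ j, t j * F i' j) - γ i' * c ≤ (∑ j, t j * F i j) - γ i * c) →
      (∀ i', (∑ j, that j * F i' j) - γ i' * c ≤ (∑ j, that j * F i j) - γ i * c)) := by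
  have hsum : ∀ i'', ∑ j, that j * F i'' j = (∑ k, t k * F i k) / F i ji * F i'' ji := by
    intro i''
    rw [Finset.sum_eq_single ji]
    · rw [hthat ji]; simp
    · intro b _ hb; rw [hthat b]; simp [hb]
    · simp
  have h1 : ∑ j, that j * F i j = ∑ j, t j * F i j := by
    rw [hsum i, div_mul_cancel₀ _ hji.ne']
  have h2 : ∀ i', i' ≠ i → ∑ j, that j * F i' j ≤ ∑ j, t j * F i' j := by
    intro i' hi'
    rw [hsum i', div_mul_eq_mul_div, div_le_iff₀ hji]
    calc (∑ k, t k * F i k) * F i' ji = ∑ k, t k * (F i' ji * F i k) := by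
          rw [Finset.sum_mul]; apply Finset.sum_congr rfl; intros; ring
      _ ≤ ∑ k, t k * (F i ji * F i' k) := by
          apply Finset.sum_le_sum; intro k _
          exact mul_le_mul_of_nonneg_left (hLR i' hi' k) (ht k)
      _ = (∑ j, t j * F i' j) * F i ji := by
          rw [Finset.sum_mul]; apply Finset.sum_congr rfl; intros; ring
  refine ⟨h1, h2, ?_⟩
  intro γ c hic i'
  rcases eq_or_ne i' i with rfl | hi'
  · exact le_refl _
  · calc (∑ j, that j * F i' j) - γ i' * c ≤ (∑ j, t j * F i' j) - γ i' * c := by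
          linarith [h2 i' hi']
      _ ≤ (∑ j, t j * F i j) - γ i * c := hic i'
      _ = (∑ j, that j * F i j) - γ i * c := by rw [h1]
end

section
/- If H first-order stochastically dominates G as cost distributions (G(c) ≥ H(c) for all c), the principal's optimal contract revenue under G need NOT be at least that under H: there exists a 4-action, 4-outcome principal-agent instance and distributions H ≻_FOSD G (G puts mass ε on cost 0 and 1−ε on cost 1; H is a point mass at cost 1) such that the optimal revenue under H is at least 1/2 while the optimal revenue under any limited-liability IC contract under G is strictly less than 1/2, for suitable ε, δ with ε < δ, (1+δ)δ < 1/4, and 7δ + 6ε < 1/2. -/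
set_option maxHeartbeats 1600000 in
/-- revenue non-monotonicity in FOSD: there is a 4-action, 4-outcome
instance and cost distributions `H ≻_FOSD G` (here `G` puts mass `ε` on cost `0` and
`1-ε` on cost `1`; `H` is a point mass at cost `1`) such that the optimal revenue
under `H` is at least `1/2`, while the revenue of every limited-liability IC menu of
contracts under `G` is strictly less than `1/2`. -/
theorem revenue_nonmonotone_in_FOSD
    (ε δ : ℝ) (hε : 0 < ε) (hεδ : ε < δ)
    (h1 : (1 + δ) * δ < 1 / 4) (h2 : 7 * δ + 6 * ε < 1 / 2)
    (F : Fin 4 → Fin 4 → ℝ) (γv rv : Fin 4 → ℝ) (ct : Fin 2 → ℝ)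
    (hF : F = ![![1, 0, 0, 0],
                ![0, 1 - δ / 4, 0, δ / 4],
                ![0, 1 / 2 - δ, 1 / 2, δ],
                ![0, 0, 1 - δ - δ ^ 2, δ + δ ^ 2]])
    (hγ : γv = ![0, 0, 1 / 2, 1 / δ])
    (hr : rv = ![0, 0, 0, 1 / δ])
    (hc : ct = ![0, 1]) :
    -- under H (point mass at cost 1) some contract extracts revenue at least 1/2
    (∃ t : Fin 4 → ℝ, (∀ j, 0 ≤ t j) ∧ ∃ a : Fin 4,
        (∀ b, (∑ j, t j * F b j) - γv b ≤ (∑ j, t j * F a j) - γv a) ∧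
        1 / 2 ≤ (∑ j, rv j * F a j) - ∑ j, t j * F a j) ∧
    -- under G (mass ε on cost 0, mass 1-ε on cost 1) every limited-liability IC menu
    -- earns strictly less than 1/2
    (∀ (t : Fin 2 → Fin 4 → ℝ) (a : Fin 2 → Fin 4),
        (∀ k j, 0 ≤ t k j) →
        (∀ k k' : Fin 2, ∀ b : Fin 4,
          (∑ j, t k' j * F b j) - γv b * ct k ≤
            (∑ j, t k j * F (a k) j) - γv (a k) * ct k) →
        ε * ((∑ j, rv j * F (a 0) j) - ∑ j, t 0 j * F (a 0) j) +
            (1 - ε) * ((∑ j, rv j * F (a 1) j) - ∑ j, t 1 j * F (a 1) j) < 1 / 2) := by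
  have hδ : 0 < δ := lt_trans hε hεδ
  have hδ14 : δ < 1 / 14 := by linarith
  have hε1 : ε < 1 := by linarith
  have hδne : δ ≠ 0 := ne_of_gt hδ
  subst hF hγ hr hc
  set u := (1 : ℝ) / δ with hu
  have hu0 : 0 ≤ u := by rw [hu]; positivity
  have hud : u * δ = 1 := by rw [hu]; field_simp
  have hu2 : (2 : ℝ) ≤ u := by rw [hu, le_div_iff₀ hδ]; linarith
  have hR3 : u * (δ + δ ^ 2) = 1 + δ := by rw [hu]; field_simp
  have hq4 : u * (δ / 4) = 1 / 4 := by rw [hu]; field_simp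
  have hδδ : (0 : ℝ) ≤ δ + δ ^ 2 := by nlinarith
  have hδδ' : (0 : ℝ) ≤ 1 - δ - δ ^ 2 := by nlinarith
  constructor
  · -- Part 1: contract paying 1 on outcome 2, take action 2
    refine ⟨![0, 0, 1, 0], ?_, 2, ?_, ?_⟩
    · intro j; fin_cases j <;> norm_num
    · intro b
      fin_cases b <;>
        (simp [Fin.sum_univ_four]; try linarith [hu2, sq_nonneg δ, hδ.le])
    · simp only [Fin.sum_univ_four, Matrix.cons_val_zero, Matrix.cons_val_one,
        Matrix.head_cons, Matrix.cons_val_two, Matrix.tail_cons, Matrix.cons_val_three,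
        Fin.isValue, zero_mul, one_mul, mul_zero, mul_one, add_zero, zero_add, sub_zero]
      linarith [hud]
  · -- Part 2: every IC menu under G earns strictly less than 1/2
    intro t a ht hIC
    have h013 := hIC 0 1 3
    have h110 := hIC 1 1 0
    have h111 := hIC 1 1 1
    clear hIC
    -- the probability of the top outcome is at most δ + δ², for every action
    have hF3 : ∀ b : Fin 4,
        (![![1, 0, 0, 0], ![0, 1 - δ / 4, 0, δ / 4], ![0, 1 / 2 - δ, 1 / 2, δ],
           ![0, 0, 1 - δ - δ ^ 2, δ + δ ^ 2]] : Fin 4 → Fin 4 → ℝ) b 3 ≤ δ + δ ^ 2 := by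
      intro b
      fin_cases b <;> (simp; try nlinarith)
    have h4 : ∀ i : Fin 4, i = 0 ∨ i = 1 ∨ i = 2 ∨ i = 3 := by decide
    rcases h4 (a 1) with h | h | h | h <;> rw [h] at h110 h111 ⊢ <;>
      simp only [Fin.sum_univ_four, Matrix.cons_val_zero, Matrix.cons_val_one,
        Matrix.head_cons, Matrix.cons_val_two, Matrix.tail_cons, Matrix.cons_val_three,
        Fin.isValue, zero_mul, one_mul, mul_zero, mul_one, add_zero, zero_add, sub_zero,
        zero_sub] at h013 h110 h111 ⊢ <;>
      [skip; rw [hq4]; rw [hud]; rw [hR3]]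
    -- `hub`: the expected reward of type 0's action is at most 1 + δ
    all_goals (
      have hub := mul_le_mul_of_nonneg_left (hF3 (a 0)) hu0
      rw [hR3] at hub)
    · -- a 1 = 0 : type 1 produces nothing
      nlinarith [mul_le_mul_of_nonneg_left hub hε.le,
        mul_le_mul_of_nonneg_left h013 hε.le,
        mul_nonneg (mul_nonneg hε.le hδδ') (ht 1 2),
        mul_nonneg (mul_nonneg hε.le hδδ) (ht 1 3),
        mul_nonneg (by linarith : (0:ℝ) ≤ 1 - ε) (ht 1 0),
        mul_le_mul_of_nonneg_right hεδ.le (by linarith : (0:ℝ) ≤ 1 + δ)]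
    · -- a 1 = 1 : reward only 1/4
      nlinarith [mul_le_mul_of_nonneg_left hub hε.le,
        mul_le_mul_of_nonneg_left h013 hε.le,
        mul_nonneg (mul_nonneg hε.le hδδ') (ht 1 2),
        mul_nonneg (mul_nonneg hε.le hδδ) (ht 1 3),
        mul_nonneg (by linarith : (0:ℝ) ≤ 1 - ε)
          (mul_nonneg (ht 1 1) (by linarith : (0:ℝ) ≤ 1 - δ / 4)),
        mul_nonneg (by linarith : (0:ℝ) ≤ 1 - ε)
          (mul_nonneg (ht 1 3) (by linarith : (0:ℝ) ≤ δ / 4)),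
        mul_le_mul_of_nonneg_right hεδ.le (by linarith : (0:ℝ) ≤ 1 + δ)]
    · -- a 1 = 2 : the main case
      have hs : 0 ≤ t 1 1 * (1 / 2 - δ) + t 1 2 * (1 / 2) + t 1 3 * δ - 1 / 2 := by
        linarith [ht 1 0]
      have hy2 : 1 - 6 * (t 1 1 * (1 / 2 - δ) + t 1 2 * (1 / 2) + t 1 3 * δ - 1 / 2)
          ≤ t 1 2 := by
        linarith [h111, ht 1 1]
      have hco : (0 : ℝ) ≤ ε * (1 - δ - δ ^ 2) := mul_nonneg hε.le hδδ'
      nlinarith [mul_le_mul_of_nonneg_left hub hε.le,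
        mul_le_mul_of_nonneg_left h013 hε.le,
        mul_le_mul_of_nonneg_left hy2 hco,
        mul_nonneg (mul_nonneg hε.le hδδ) (ht 1 3),
        mul_nonneg (by linarith : (0:ℝ) ≤ 1 - 7 * ε) hs,
        mul_nonneg (mul_nonneg (mul_nonneg hε.le hδ.le) hδ.le) hs,
        mul_nonneg (mul_nonneg hε.le hδ.le) hs,
        mul_pos (by nlinarith : (0:ℝ) < 1 / 2 - 2 * δ - δ ^ 2) hε]
    · -- a 1 = 3 : effort too costly
      have hP1b : 2 ≤ t 1 2 * (1 - δ - δ ^ 2) + t 1 3 * (δ + δ ^ 2) := by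
        linarith [h110, hu2, ht 1 0]
      have hP0b : 2 ≤ t 0 0 *
            (![![1, 0, 0, 0], ![0, 1 - δ / 4, 0, δ / 4], ![0, 1 / 2 - δ, 1 / 2, δ],
               ![0, 0, 1 - δ - δ ^ 2, δ + δ ^ 2]] : Fin 4 → Fin 4 → ℝ) (a 0) 0 +
          t 0 1 * (![![1, 0, 0, 0], ![0, 1 - δ / 4, 0, δ / 4], ![0, 1 / 2 - δ, 1 / 2, δ],
               ![0, 0, 1 - δ - δ ^ 2, δ + δ ^ 2]] : Fin 4 → Fin 4 → ℝ) (a 0) 1 +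
          t 0 2 * (![![1, 0, 0, 0], ![0, 1 - δ / 4, 0, δ / 4], ![0, 1 / 2 - δ, 1 / 2, δ],
               ![0, 0, 1 - δ - δ ^ 2, δ + δ ^ 2]] : Fin 4 → Fin 4 → ℝ) (a 0) 2 +
          t 0 3 * (![![1, 0, 0, 0], ![0, 1 - δ / 4, 0, δ / 4], ![0, 1 / 2 - δ, 1 / 2, δ],
               ![0, 0, 1 - δ - δ ^ 2, δ + δ ^ 2]] : Fin 4 → Fin 4 → ℝ) (a 0) 3 := by
        linarith [h013, hP1b]
      nlinarith [mul_le_mul_of_nonneg_left hub hε.le,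
        mul_le_mul_of_nonneg_left hP0b hε.le,
        mul_le_mul_of_nonneg_left hP1b (by linarith : (0:ℝ) ≤ 1 - ε)]
end
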